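/- arXiv:1806.10752 — 4 statements merged into one kernel-verified Lean document; each statement's English description precedes it below -/
import Mathlib

section
/- For every integer α ≥ 0 and every real τ > -1/2, one has Γ((2τ+1)(α+1)) / α! ≍ (2τ+1)^{(2τ+1)α} · (α+1)^τ · (α!)^{2τ}, i.e. there exist constants c, C > 0 depending only on τ such that c·(2τ+1)^{(2τ+1)α}(α+1)^τ(α!)^{2τ} ≤ Γ((2τ+1)(α+1))/α! ≤ C·(2τ+1)^{(2τ+1)α}(α+1)^τ(α!)^{2τ}. -/
open Real

set_option maxHeartbeats 1000000

lemma sg_eps1 (x L mR : ℝ) (hx2 : 2 ≤ x) (hm2 : 2 ≤ mR) (hmx : mR ≤ x) (hxm : x < mR+1)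
    (hu : x*L ≤ mR - x) (hl : mR*(-L) ≤ x - mR) (hLneg : L ≤ 0) (hLhalf : -L ≤ (x-mR)/2) :
    -2 ≤ (x-1/2)*L + (x-mR) ∧ (x-1/2)*L + (x-mR) ≤ 1 := by
  have hprod : (x-mR)*(-L) ≤ (x-mR)*((x-mR)/2) :=
    mul_le_mul_of_nonneg_left hLhalf (by linarith)
  have hsq : (x-mR)*((x-mR)/2) ≤ 1/2 := by nlinarith
  constructor
  · nlinarith
  · nlinarith

lemma sg_eps2 (s nR D : ℝ) (hs : 0 < s) (hn : 2 ≤ nR) (hD0 : 0 ≤ D)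
    (hd : (nR-1)*D ≤ 1) :
    0 ≤ (s*(nR-1) + s/2)*D ∧ (s*(nR-1) + s/2)*D ≤ 2*s := by
  have hD1 : D ≤ 1 := by nlinarith
  constructor
  · apply mul_nonneg _ hD0; nlinarith
  · have h1 : s*((nR-1)*D) ≤ s*1 := mul_le_mul_of_nonneg_left hd hs.le
    have h2 : s*D ≤ s*1 := mul_le_mul_of_nonneg_left hD1 hs.le
    nlinarith

lemma sg_log_factorial (k : ℕ) (hk : 1 ≤ k) :
    (1/2)*Real.log π ≤ Real.log (Nat.factorial k) - (((k:ℝ) + 1/2)*Real.log k - k + (1/2)*Real.log 2) ∧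
      Real.log (Nat.factorial k) - (((k:ℝ) + 1/2)*Real.log k - k + (1/2)*Real.log 2) ≤ 1 - (1/2)*Real.log 2 := by
  obtain ⟨j, rfl⟩ : ∃ j, k = j + 1 := ⟨k - 1, (Nat.succ_pred_eq_of_pos hk).symm⟩
  have hkpos : (0:ℝ) < (j+1:ℕ) := by positivity
  have hd : (0:ℝ) < √(2 * (j+1:ℕ)) * ((j+1:ℕ) / Real.exp 1) ^ (j+1) := by positivity
  have hseq : Real.log (Stirling.stirlingSeq (j+1)) =
      Real.log (Nat.factorial (j+1)) - ((((j+1:ℕ):ℝ) + 1/2)*Real.log (j+1:ℕ) - ((j+1:ℕ):ℝ) + (1/2)*Real.log 2) := by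
    rw [Stirling.stirlingSeq, Real.log_div (by positivity) (ne_of_gt hd), Real.log_mul (by positivity) (by positivity),
      Real.log_sqrt (by positivity), Real.log_mul (by norm_num) (ne_of_gt hkpos), Real.log_pow,
      Real.log_div (ne_of_gt hkpos) (Real.exp_ne_zero 1), Real.log_exp]
    push_cast
    ring
  have hlb : √π ≤ Stirling.stirlingSeq (j+1) :=
    Stirling.stirlingSeq'_antitone.le_of_tendsto
      (Stirling.tendsto_stirlingSeq_sqrt_pi.comp (Filter.tendsto_add_atTop_nat 1)) j
  have hub : Stirling.stirlingSeq (j+1) ≤ Real.exp 1 / √2 := by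
    have := Stirling.stirlingSeq'_antitone (Nat.zero_le j)
    simpa [Stirling.stirlingSeq_one] using this
  have hlb' : (1/2)*Real.log π ≤ Real.log (Stirling.stirlingSeq (j+1)) := by
    calc (1/2)*Real.log π = Real.log (√π) := by rw [Real.log_sqrt pi_pos.le]; ring
    _ ≤ _ := Real.log_le_log (by positivity) hlb
  have hub' : Real.log (Stirling.stirlingSeq (j+1)) ≤ 1 - (1/2)*Real.log 2 := by
    calc Real.log (Stirling.stirlingSeq (j+1)) ≤ Real.log (Real.exp 1 / √2) :=
        Real.log_le_log (Stirling.stirlingSeq'_pos j) hub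
    _ = 1 - (1/2)*Real.log 2 := by
        rw [Real.log_div (Real.exp_ne_zero 1) (by positivity), Real.log_exp, Real.log_sqrt (by norm_num)]
        ring
  rw [← hseq]
  exact ⟨hlb', hub'⟩

lemma sg_gamma_sandwich (x : ℝ) (hx : 2 ≤ x) :
    (Nat.factorial ⌊x⌋₊ : ℝ) * (⌊x⌋₊:ℝ) ^ (x - ⌊x⌋₊ - 1) / 2 ≤ Real.Gamma x ∧
    Real.Gamma x ≤ (Nat.factorial ⌊x⌋₊ : ℝ) * (⌊x⌋₊:ℝ) ^ (x - ⌊x⌋₊ - 1) := by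
  set m := ⌊x⌋₊ with hmdef
  have hm2 : 2 ≤ m := Nat.le_floor (by exact_mod_cast hx)
  have hmx : (m:ℝ) ≤ x := Nat.floor_le (by linarith)
  have hxm : x < m + 1 := Nat.lt_floor_add_one x
  have hmpos : (0:ℝ) < m := by exact_mod_cast Nat.lt_of_lt_of_le two_pos hm2
  have hfacpos : (0:ℝ) < (Nat.factorial m : ℝ) := by exact_mod_cast Nat.factorial_pos m
  obtain ⟨p, hp⟩ : ∃ p, m = p + 1 := ⟨m - 1, (Nat.succ_pred_eq_of_pos (by omega)).symm⟩
  have hGm : Real.Gamma (m:ℝ) = (Nat.factorial p : ℝ) := by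
    rw [hp]; push_cast; exact Real.Gamma_nat_eq_factorial p
  have hGm1 : Real.Gamma ((m:ℝ)+1) = (Nat.factorial m : ℝ) := by
    rw [show ((m:ℝ)+1) = ((m+1 : ℕ):ℝ) by push_cast; ring]
    exact_mod_cast Real.Gamma_nat_eq_factorial m
  have hGm2 : Real.Gamma ((m:ℝ)+2) = ((m:ℝ)+1) * (Nat.factorial m : ℝ) := by
    rw [show ((m:ℝ)+2) = ((m+1 : ℕ):ℝ)+1 by push_cast; ring]
    rw [Real.Gamma_nat_eq_factorial (m+1)]
    push_cast [Nat.factorial_succ]; ring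
  have hfacm : (Nat.factorial m : ℝ) = m * Nat.factorial p := by
    rw [hp]; push_cast [Nat.factorial_succ, hp]; ring
  have hGxpos : 0 < Real.Gamma x := Real.Gamma_pos_of_pos (by linarith)
  constructor
  · -- lower bound
    set a : ℝ := 1/((m:ℝ)+2-x) with hadef
    set b : ℝ := ((m:ℝ)+1-x)/((m:ℝ)+2-x) with hbdef
    have hden : (0:ℝ) < (m:ℝ)+2-x := by linarith
    have ha : 0 < a := by positivity
    have hb : 0 < b := by apply div_pos <;> linarith
    have hab : a + b = 1 := by rw [hadef, hbdef]; field_simp; ring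
    have key := Real.Gamma_mul_add_mul_le_rpow_Gamma_mul_rpow_Gamma
      (s := x) (t := (m:ℝ)+2) (by linarith) (by linarith) ha hb hab
    have harg : a*x + b*((m:ℝ)+2) = (m:ℝ)+1 := by
      rw [hadef, hbdef]; field_simp; ring
    rw [harg, hGm1, hGm2] at key
    have hmul : (((m:ℝ)+1) * (Nat.factorial m:ℝ)) ^ b = ((m:ℝ)+1)^b * (Nat.factorial m:ℝ)^b :=
      Real.mul_rpow (by linarith) hfacpos.le
    rw [hmul] at key
    have hBpos : (0:ℝ) < ((m:ℝ)+1)^b := Real.rpow_pos_of_pos (by linarith) b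
    have hMpos : (0:ℝ) < (Nat.factorial m:ℝ)^b := Real.rpow_pos_of_pos hfacpos b
    have hfinal : (Nat.factorial m:ℝ) / ((Nat.factorial m:ℝ)^b * ((m:ℝ)+1)^b) ≤ Real.Gamma x ^ a := by
      rw [div_le_iff₀ (by positivity)]
      calc (Nat.factorial m:ℝ) ≤ Real.Gamma x ^ a * (((m:ℝ)+1)^b * (Nat.factorial m:ℝ)^b) := key
        _ = Real.Gamma x ^ a * ((Nat.factorial m:ℝ)^b * ((m:ℝ)+1)^b) := by ring
    have hba : (x-(m:ℝ)-1) * a = -b := by rw [hadef, hbdef]; field_simp; ring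
    have hma : (Nat.factorial m:ℝ)^a = (Nat.factorial m:ℝ) * ((Nat.factorial m:ℝ)^b)⁻¹ := by
      rw [show a = 1 - b by linarith, Real.rpow_sub hfacpos, Real.rpow_one, div_eq_mul_inv]
    have hexp : ((Nat.factorial m : ℝ) * ((m:ℝ)+1) ^ (x-(m:ℝ)-1)) ^ a
        = (Nat.factorial m:ℝ) / ((Nat.factorial m:ℝ)^b * ((m:ℝ)+1)^b) := by
      rw [Real.mul_rpow hfacpos.le (Real.rpow_nonneg (by linarith) _),
        ← Real.rpow_mul (by linarith : (0:ℝ) ≤ (m:ℝ)+1), hba, Real.rpow_neg (by linarith), hma]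
      rw [div_eq_mul_inv, mul_inv]; ring
    have hQ : ((Nat.factorial m : ℝ) * ((m:ℝ)+1) ^ (x-(m:ℝ)-1)) ^ a ≤ (Real.Gamma x) ^ a := by
      rw [hexp]; exact hfinal
    have hge : (Nat.factorial m : ℝ) * ((m:ℝ)+1) ^ (x-(m:ℝ)-1) ≤ Real.Gamma x :=
      (Real.rpow_le_rpow_iff (by positivity) hGxpos.le ha).mp hQ
    -- now compare m^(x-m-1) with 2*(m+1)^(x-m-1)
    have he0 : x - (m:ℝ) - 1 ≤ 0 := by linarith
    have hA : (0:ℝ) < (m:ℝ) ^ (-(x-(m:ℝ)-1)) := Real.rpow_pos_of_pos hmpos _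
    have hB : (0:ℝ) < ((m:ℝ)+1) ^ (-(x-(m:ℝ)-1)) := Real.rpow_pos_of_pos (by linarith) _
    have hBA : ((m:ℝ)+1)^(-(x-(m:ℝ)-1)) ≤ 2 * (m:ℝ)^(-(x-(m:ℝ)-1)) := by
      calc ((m:ℝ)+1)^(-(x-(m:ℝ)-1)) ≤ (2*(m:ℝ))^(-(x-(m:ℝ)-1)) :=
            Real.rpow_le_rpow (by linarith) (by linarith) (by linarith)
        _ = 2^(-(x-(m:ℝ)-1)) * (m:ℝ)^(-(x-(m:ℝ)-1)) := Real.mul_rpow (by norm_num) hmpos.le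
        _ ≤ 2 * (m:ℝ)^(-(x-(m:ℝ)-1)) := by
            have h2 : (2:ℝ)^(-(x-(m:ℝ)-1)) ≤ 2^(1:ℝ) :=
              Real.rpow_le_rpow_of_exponent_le one_le_two (by linarith)
            rw [Real.rpow_one] at h2
            exact mul_le_mul_of_nonneg_right h2 (Real.rpow_nonneg hmpos.le _)
    have hmain : (m:ℝ)^(x-(m:ℝ)-1) ≤ 2 * ((m:ℝ)+1)^(x-(m:ℝ)-1) := by
      have hrw1 : (m:ℝ)^(x-(m:ℝ)-1) = ((m:ℝ)^(-(x-(m:ℝ)-1)))⁻¹ := by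
        rw [← Real.rpow_neg hmpos.le, neg_neg]
      have hrw2 : ((m:ℝ)+1)^(x-(m:ℝ)-1) = (((m:ℝ)+1)^(-(x-(m:ℝ)-1)))⁻¹ := by
        rw [← Real.rpow_neg (by linarith), neg_neg]
      rw [hrw1, hrw2]
      rw [show (2:ℝ) * (((m:ℝ)+1)^(-(x-(m:ℝ)-1)))⁻¹ = (((m:ℝ)+1)^(-(x-(m:ℝ)-1))/2)⁻¹ by
        rw [inv_div]; ring]
      apply inv_anti₀ (by positivity)
      linarith
    calc (Nat.factorial m : ℝ) * (m:ℝ) ^ (x - (m:ℝ) - 1) / 2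
        ≤ (Nat.factorial m : ℝ) * (2 * ((m:ℝ)+1) ^ (x - (m:ℝ) - 1)) / 2 := by
          gcongr
      _ = (Nat.factorial m : ℝ) * ((m:ℝ)+1) ^ (x - (m:ℝ) - 1) := by ring
      _ ≤ Real.Gamma x := hge
  · -- upper bound
    rcases eq_or_lt_of_le hmx with heq | hlt
    · rw [← heq, hGm, hfacm, show (m:ℝ) - (m:ℝ) - 1 = -1 by ring, Real.rpow_neg_one]
      apply le_of_eq
      field_simp
    · set lam : ℝ := x - m with hlamdef
      have hlam : 0 < lam := sub_pos.mpr hlt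
      have hlam1 : lam < 1 := by simp only [hlamdef]; linarith
      have key := Real.Gamma_mul_add_mul_le_rpow_Gamma_mul_rpow_Gamma
        (s := (m:ℝ)) (t := (m:ℝ)+1) hmpos (by linarith) (by linarith : (0:ℝ) < 1 - lam) hlam (by ring)
      have harg : (1-lam)*(m:ℝ) + lam*((m:ℝ)+1) = x := by simp only [hlamdef]; ring
      rw [harg, hGm, hGm1] at key
      calc Real.Gamma x ≤ (Nat.factorial p:ℝ)^(1-lam) * (Nat.factorial m:ℝ)^lam := key
        _ = (Nat.factorial m : ℝ) * (m:ℝ) ^ (x - (m:ℝ) - 1) := by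
          have hpf : (Nat.factorial p : ℝ) = Nat.factorial m / m := by rw [hfacm]; field_simp
          rw [hpf, Real.div_rpow hfacpos.le hmpos.le,
            div_mul_eq_mul_div, ← Real.rpow_add hfacpos, sub_add_cancel, Real.rpow_one]
          rw [show x - (m:ℝ) - 1 = -(1-lam) by simp only [hlamdef]; ring, Real.rpow_neg hmpos.le,
            div_eq_mul_inv]

lemma sg_eventual (τ : ℝ) (hτ : τ > -(1/2)) :
    ∃ lo hi : ℝ, ∀ n : ℕ, 2 ≤ n → 2 ≤ (2*τ+1) * (n:ℝ) →
      lo ≤ Real.log (Real.Gamma ((2*τ+1) * (n:ℝ))) -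
          ((2*τ+1)*((n:ℝ)-1) * Real.log (2*τ+1) + τ * Real.log (n:ℝ)
            + (2*τ+1) * Real.log (Nat.factorial (n-1))) ∧
      Real.log (Real.Gamma ((2*τ+1) * (n:ℝ))) -
          ((2*τ+1)*((n:ℝ)-1) * Real.log (2*τ+1) + τ * Real.log (n:ℝ)
            + (2*τ+1) * Real.log (Nat.factorial (n-1))) ≤ hi := by
  have hs : (0:ℝ) < 2*τ+1 := by linarith
  refine ⟨((2*τ+1)-1/2)*Real.log (2*τ+1) - (2*τ+1) + (1/2-(2*τ+1)/2)*Real.log 2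
      - Real.log 2 + (1/2)*Real.log π - (2*τ+1)*(1-(1/2)*Real.log 2) - 2,
    ((2*τ+1)-1/2)*Real.log (2*τ+1) - (2*τ+1) + (1/2-(2*τ+1)/2)*Real.log 2
      + (1 - (1/2)*Real.log 2) - (2*τ+1)*((1/2)*Real.log π) + 1 + 2*(2*τ+1), ?_⟩
  intro n hn hsn
  have hnR : (2:ℝ) ≤ (n:ℝ) := by exact_mod_cast hn
  set x : ℝ := (2*τ+1) * (n:ℝ) with hxdef
  have hx2 : (2:ℝ) ≤ x := hsn
  have hxpos : (0:ℝ) < x := by linarith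
  set m := ⌊x⌋₊ with hmdef
  have hm2 : 2 ≤ m := Nat.le_floor (by exact_mod_cast hx2)
  have hmx : (m:ℝ) ≤ x := Nat.floor_le (by linarith)
  have hxm : x < (m:ℝ) + 1 := Nat.lt_floor_add_one x
  have hmpos : (0:ℝ) < (m:ℝ) := by exact_mod_cast Nat.lt_of_lt_of_le two_pos hm2
  have hm2R : (2:ℝ) ≤ (m:ℝ) := by exact_mod_cast hm2
  have hfacpos : (0:ℝ) < (Nat.factorial m : ℝ) := by exact_mod_cast Nat.factorial_pos m
  have hGxpos : 0 < Real.Gamma x := Real.Gamma_pos_of_pos (by linarith)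
  have hrp : (0:ℝ) < (m:ℝ) ^ (x - (m:ℝ) - 1) := Real.rpow_pos_of_pos hmpos _
  obtain ⟨hsand1, hsand2⟩ := sg_gamma_sandwich x hx2
  have hlogprod : Real.log ((Nat.factorial m : ℝ) * (m:ℝ) ^ (x - (m:ℝ) - 1))
      = Real.log (Nat.factorial m) + (x - (m:ℝ) - 1) * Real.log m := by
    rw [Real.log_mul (ne_of_gt hfacpos) (ne_of_gt hrp), Real.log_rpow hmpos]
  have hup : Real.log (Real.Gamma x) ≤ Real.log (Nat.factorial m) + (x - (m:ℝ) - 1) * Real.log m := by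
    rw [← hlogprod]; exact Real.log_le_log hGxpos hsand2
  have hlo : Real.log (Nat.factorial m) + (x - (m:ℝ) - 1) * Real.log m - Real.log 2
      ≤ Real.log (Real.Gamma x) := by
    have h := Real.log_le_log (by positivity) hsand1
    rwa [Real.log_div (by positivity) (by norm_num), hlogprod] at h
  have hσm := sg_log_factorial m (by omega)
  have hσn := sg_log_factorial (n-1) (by omega)
  have hn1cast : ((n-1:ℕ):ℝ) = (n:ℝ) - 1 := by
    push_cast [Nat.cast_sub (by omega : 1 ≤ n)]; ring
  rw [hn1cast] at hσn
  have hσn1 : (2*τ+1)*((1/2)*Real.log π)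
      ≤ (2*τ+1)*(Real.log (Nat.factorial (n-1)) - ((((n:ℝ)-1) + 1/2)*Real.log ((n:ℝ)-1) - ((n:ℝ)-1) + (1/2)*Real.log 2)) :=
    mul_le_mul_of_nonneg_left hσn.1 hs.le
  have hσn2 : (2*τ+1)*(Real.log (Nat.factorial (n-1)) - ((((n:ℝ)-1) + 1/2)*Real.log ((n:ℝ)-1) - ((n:ℝ)-1) + (1/2)*Real.log 2))
      ≤ (2*τ+1)*(1 - (1/2)*Real.log 2) :=
    mul_le_mul_of_nonneg_left hσn.2 hs.le
  -- ε₁ bounds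
  have hu' : Real.log (m:ℝ) - Real.log x ≤ (m:ℝ)/x - 1 := by
    have := Real.log_le_sub_one_of_pos (show (0:ℝ) < (m:ℝ)/x by positivity)
    rwa [Real.log_div (ne_of_gt hmpos) (ne_of_gt hxpos)] at this
  have hu : x * (Real.log (m:ℝ) - Real.log x) ≤ (m:ℝ) - x := by
    calc x * (Real.log (m:ℝ) - Real.log x) ≤ x * ((m:ℝ)/x - 1) :=
          mul_le_mul_of_nonneg_left hu' hxpos.le
      _ = (m:ℝ) - x := by field_simp
  have hl' : Real.log x - Real.log (m:ℝ) ≤ x/(m:ℝ) - 1 := by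
    have := Real.log_le_sub_one_of_pos (show (0:ℝ) < x/(m:ℝ) by positivity)
    rwa [Real.log_div (ne_of_gt hxpos) (ne_of_gt hmpos)] at this
  have hl : (m:ℝ) * (Real.log x - Real.log (m:ℝ)) ≤ x - (m:ℝ) := by
    calc (m:ℝ) * (Real.log x - Real.log (m:ℝ)) ≤ (m:ℝ) * (x/(m:ℝ) - 1) :=
          mul_le_mul_of_nonneg_left hl' hmpos.le
      _ = x - (m:ℝ) := by field_simp
  have hLneg : Real.log (m:ℝ) - Real.log x ≤ 0 :=
    sub_nonpos.mpr (Real.log_le_log hmpos hmx)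
  have hL0 : 0 ≤ Real.log x - Real.log (m:ℝ) := by linarith
  have hLhalf : -(Real.log (m:ℝ) - Real.log x) ≤ (x - (m:ℝ))/2 := by
    have h2m : 2*(Real.log x - Real.log (m:ℝ)) ≤ (m:ℝ)*(Real.log x - Real.log (m:ℝ)) :=
      mul_le_mul_of_nonneg_right hm2R hL0
    linarith
  obtain ⟨hε₁lo, hε₁hi⟩ := sg_eps1 x (Real.log (m:ℝ) - Real.log x) (m:ℝ) hx2 hm2R hmx hxm
    hu (by linarith) hLneg hLhalf
  have hlogx : Real.log x = Real.log (2*τ+1) + Real.log (n:ℝ) := by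
    rw [hxdef, Real.log_mul (ne_of_gt hs) (by positivity)]
  rw [hlogx] at hε₁lo hε₁hi
  -- ε₂ bounds
  have hn1pos : (0:ℝ) < (n:ℝ) - 1 := by linarith
  have hD0 : 0 ≤ Real.log (n:ℝ) - Real.log ((n:ℝ)-1) :=
    sub_nonneg.mpr (Real.log_le_log hn1pos (by linarith))
  have hd' : Real.log (n:ℝ) - Real.log ((n:ℝ)-1) ≤ (n:ℝ)/((n:ℝ)-1) - 1 := by
    have := Real.log_le_sub_one_of_pos (show (0:ℝ) < (n:ℝ)/((n:ℝ)-1) by positivity)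
    rwa [Real.log_div (by positivity) (ne_of_gt hn1pos)] at this
  have hd : ((n:ℝ)-1)*(Real.log (n:ℝ) - Real.log ((n:ℝ)-1)) ≤ 1 := by
    calc ((n:ℝ)-1)*(Real.log (n:ℝ) - Real.log ((n:ℝ)-1)) ≤ ((n:ℝ)-1)*((n:ℝ)/((n:ℝ)-1) - 1) :=
          mul_le_mul_of_nonneg_left hd' hn1pos.le
      _ = 1 := by field_simp; ring
  obtain ⟨hε₂lo, hε₂hi⟩ := sg_eps2 (2*τ+1) (n:ℝ) (Real.log (n:ℝ) - Real.log ((n:ℝ)-1)) hs hnR hD0 hd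
  -- the key algebraic identity
  have hT : Real.log (Real.Gamma x) -
      ((2*τ+1)*((n:ℝ)-1) * Real.log (2*τ+1) + τ * Real.log (n:ℝ)
        + (2*τ+1) * Real.log (Nat.factorial (n-1)))
    = (Real.log (Real.Gamma x) - (Real.log (Nat.factorial m) + (x - (m:ℝ) - 1) * Real.log m))
    + (Real.log (Nat.factorial m) - (((m:ℝ) + 1/2)*Real.log m - (m:ℝ) + (1/2)*Real.log 2))
    - (2*τ+1)*(Real.log (Nat.factorial (n-1)) - ((((n:ℝ)-1) + 1/2)*Real.log ((n:ℝ)-1) - ((n:ℝ)-1) + (1/2)*Real.log 2))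
    + ((x-1/2)*(Real.log (m:ℝ) - (Real.log (2*τ+1) + Real.log (n:ℝ))) + (x - (m:ℝ)))
    + (((2*τ+1)*((n:ℝ)-1) + (2*τ+1)/2)*(Real.log (n:ℝ) - Real.log ((n:ℝ)-1)))
    + (((2*τ+1)-1/2)*Real.log (2*τ+1) - (2*τ+1) + (1/2-(2*τ+1)/2)*Real.log 2) := by
    simp only [hxdef]; ring
  constructor
  · linarith [hσm.1, hσm.2]
  · linarith [hσm.1, hσm.2]

theorem stirling_gamma_ratio (τ : ℝ) (hτ : τ > -(1/2)) :
    ∃ c C : ℝ, 0 < c ∧ 0 < C ∧ ∀ α : ℕ,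
      c * ((2*τ+1) ^ ((2*τ+1) * (α:ℝ)) * ((α:ℝ)+1) ^ τ * (Nat.factorial α : ℝ) ^ (2*τ))
        ≤ Real.Gamma ((2*τ+1) * ((α:ℝ)+1)) / (Nat.factorial α : ℝ) ∧
      Real.Gamma ((2*τ+1) * ((α:ℝ)+1)) / (Nat.factorial α : ℝ)
        ≤ C * ((2*τ+1) ^ ((2*τ+1) * (α:ℝ)) * ((α:ℝ)+1) ^ τ * (Nat.factorial α : ℝ) ^ (2*τ)) := by
  have hs : (0:ℝ) < 2*τ+1 := by linarith
  set G : ℕ → ℝ := fun α =>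
    (2*τ+1) ^ ((2*τ+1) * (α:ℝ)) * ((α:ℝ)+1) ^ τ * (Nat.factorial α : ℝ) ^ (2*τ) with hGdef
  set F : ℕ → ℝ := fun α =>
    Real.Gamma ((2*τ+1) * ((α:ℝ)+1)) / (Nat.factorial α : ℝ) with hFdef
  have hGpos : ∀ α : ℕ, 0 < G α := by
    intro α
    have h1 : (0:ℝ) < (α:ℝ)+1 := by positivity
    have h2 : (0:ℝ) < (Nat.factorial α : ℝ) := by exact_mod_cast Nat.factorial_pos α
    exact mul_pos (mul_pos (Real.rpow_pos_of_pos hs _) (Real.rpow_pos_of_pos h1 _))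
      (Real.rpow_pos_of_pos h2 _)
  have hFpos : ∀ α : ℕ, 0 < F α := by
    intro α
    have h2 : (0:ℝ) < (Nat.factorial α : ℝ) := by exact_mod_cast Nat.factorial_pos α
    exact div_pos (Real.Gamma_pos_of_pos (by positivity)) h2
  obtain ⟨lo, hi, hev⟩ := sg_eventual τ hτ
  set N : ℕ := max 1 ⌈2/(2*τ+1)⌉₊ with hNdef
  -- eventual bounds
  have hbig : ∀ α : ℕ, N ≤ α → Real.exp lo ≤ F α / G α ∧ F α / G α ≤ Real.exp hi := by
    intro α hα
    have hα1 : 1 ≤ α := le_trans (le_max_left _ _) hα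
    have hceil : (2/(2*τ+1) : ℝ) ≤ (α:ℝ) + 1 := by
      calc (2/(2*τ+1) : ℝ) ≤ (⌈2/(2*τ+1)⌉₊ : ℝ) := Nat.le_ceil _
        _ ≤ (α:ℝ) := by exact_mod_cast le_trans (le_max_right _ _) hα
        _ ≤ (α:ℝ) + 1 := by linarith
    have hsn : (2:ℝ) ≤ (2*τ+1) * ((α:ℝ)+1) := by
      have := mul_le_mul_of_nonneg_left hceil hs.le
      rwa [mul_div_cancel₀ _ (ne_of_gt hs)] at this
    have h := hev (α+1) (by omega) (by push_cast; exact hsn)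
    simp only [Nat.add_sub_cancel] at h
    push_cast at h
    -- now compute log (F α / G α)
    have hfac : (0:ℝ) < (Nat.factorial α : ℝ) := by exact_mod_cast Nat.factorial_pos α
    have hα1R : (0:ℝ) < (α:ℝ)+1 := by positivity
    have hGx : 0 < Real.Gamma ((2*τ+1) * ((α:ℝ)+1)) := Real.Gamma_pos_of_pos (by positivity)
    have hlogF : Real.log (F α) = Real.log (Real.Gamma ((2*τ+1) * ((α:ℝ)+1)))
        - Real.log (Nat.factorial α) := by
      rw [hFdef]; exact Real.log_div (ne_of_gt hGx) (ne_of_gt hfac)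
    have hlogG : Real.log (G α) = (2*τ+1) * (α:ℝ) * Real.log (2*τ+1)
        + τ * Real.log ((α:ℝ)+1) + 2*τ * Real.log (Nat.factorial α) := by
      rw [hGdef]
      simp only
      rw [Real.log_mul (by positivity) (by positivity),
        Real.log_mul (by positivity) (by positivity),
        Real.log_rpow hs, Real.log_rpow hα1R, Real.log_rpow hfac]
    have hlogFG : Real.log (F α / G α) = Real.log (F α) - Real.log (G α) :=
      Real.log_div (ne_of_gt (hFpos α)) (ne_of_gt (hGpos α))
    have hTeq : Real.log (F α / G α)
        = Real.log (Real.Gamma ((2*τ+1) * ((α:ℝ)+1))) -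
          ((2*τ+1)*(((α:ℝ)+1)-1) * Real.log (2*τ+1) + τ * Real.log ((α:ℝ)+1)
            + (2*τ+1) * Real.log (Nat.factorial α)) := by
      rw [hlogFG, hlogF, hlogG]; ring
    rw [← hTeq] at h
    constructor
    · calc Real.exp lo ≤ Real.exp (Real.log (F α / G α)) := Real.exp_le_exp.mpr h.1
        _ = F α / G α := Real.exp_log (div_pos (hFpos α) (hGpos α))
    · calc F α / G α = Real.exp (Real.log (F α / G α)) :=
          (Real.exp_log (div_pos (hFpos α) (hGpos α))).symm
        _ ≤ Real.exp hi := Real.exp_le_exp.mpr h.2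
  -- assemble constants
  have hne : (Finset.range (N+1)).Nonempty := ⟨0, by simp⟩
  set c : ℝ := min (Real.exp lo) ((Finset.range (N+1)).inf' hne (fun α => F α / G α)) with hcdef
  set C : ℝ := max (Real.exp hi) ((Finset.range (N+1)).sup' hne (fun α => F α / G α)) with hCdef
  have hcpos : 0 < c := by
    apply lt_min (Real.exp_pos lo)
    rw [Finset.lt_inf'_iff]
    intro b _
    exact div_pos (hFpos b) (hGpos b)
  have hCpos : 0 < C := lt_max_of_lt_left (Real.exp_pos hi)
  refine ⟨c, C, hcpos, hCpos, fun α => ?_⟩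
  have hcle : c ≤ F α / G α := by
    rcases le_or_gt α N with hle | hlt
    · exact le_trans (min_le_right _ _)
        (Finset.inf'_le (fun α => F α / G α) (Finset.mem_range.mpr (Nat.lt_succ_of_le hle)))
    · exact le_trans (min_le_left _ _) (hbig α hlt.le).1
  have hCge : F α / G α ≤ C := by
    rcases le_or_gt α N with hle | hlt
    · exact le_trans (Finset.le_sup' (fun α => F α / G α) (Finset.mem_range.mpr (Nat.lt_succ_of_le hle)))
        (le_max_right _ _)
    · exact le_trans (hbig α hlt.le).2 (le_max_left _ _)
  constructor
  · have := (le_div_iff₀ (hGpos α)).mp hcle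
    exact this
  · exact (div_le_iff₀ (hGpos α)).mp hCge
end

section
/- Let τ > -1/2 and 0 < r₀ < r in each coordinate (r₀, r ∈ (0,∞)^d). Suppose F(z) = Σ_α c(α) z^α/√(α!) is entire on ℂ^d with |c(α)| ≤ C (2r₀/(2τ+1))^{((2τ+1)/2)·α} (α!)^{-τ} for all α ∈ ℕ^d. Then |F(z)| ≲ exp(r_1|z_1|^{2/(2τ+1)} + ⋯ + r_d|z_d|^{2/(2τ+1)}) for all z ∈ ℂ^d. -/
set_option maxHeartbeats 1000000

open Real

lemma summable_pi_geometric : ∀ (d : ℕ) (q : Fin d → ℝ), (∀ j, 0 ≤ q j) → (∀ j, q j < 1) →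
    Summable (fun α : Fin d → ℕ => ∏ j, q j ^ α j) := by
  intro d
  induction d with
  | zero =>
    intro q _ _
    exact Summable.of_finite
  | succ n ih =>
    intro q h0 h1
    have hg : Summable (fun β : Fin n → ℕ => ∏ j : Fin n, (q j.succ) ^ β j) :=
      ih (fun j => q j.succ) (fun j => h0 j.succ) (fun j => h1 j.succ)
    have hf : Summable (fun m : ℕ => q 0 ^ m) :=
      summable_geometric_of_lt_one (h0 0) (h1 0)
    have hf' : 0 ≤ fun m : ℕ => q 0 ^ m := fun m => pow_nonneg (h0 0) _
    have hg' : 0 ≤ fun β : Fin n → ℕ => ∏ j : Fin n, (q j.succ) ^ β j :=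
      fun b => Finset.prod_nonneg fun j _ => pow_nonneg (h0 _) _
    have base : Summable (fun p : ℕ × (Fin n → ℕ) =>
        q 0 ^ p.1 * ∏ j : Fin n, q j.succ ^ p.2 j) :=
      Summable.mul_of_nonneg (f := fun m : ℕ => q 0 ^ m)
        (g := fun β : Fin n → ℕ => ∏ j : Fin n, (q j.succ) ^ β j) hf hg hf' hg'
    have hsum : Summable ((fun α : Fin (n + 1) → ℕ => ∏ j, q j ^ α j)
        ∘ (Fin.consEquiv fun _ : Fin (n + 1) => ℕ)) := by
      refine base.congr fun p => ?_
      simp [Fin.consEquiv, Fin.prod_univ_succ]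
    exact (Equiv.summable_iff _).mp hsum

lemma onedim_bound (σ A b t : ℝ) (hσ : 0 < σ) (hA : 0 ≤ A) (hb : 0 < b) (ht : 0 ≤ t) (n : ℕ) :
    A ^ (σ * (n : ℝ)) * (n.factorial : ℝ) ^ (-σ) * t ^ n
      ≤ (b ^ (-σ)) ^ n * Real.exp (σ * b * A * t ^ (1 / σ)) := by
  set w : ℝ := A * b * t ^ (1 / σ) with hw
  have hw0 : 0 ≤ w := by positivity
  have hfac : (0 : ℝ) < (n.factorial : ℝ) := by exact_mod_cast n.factorial_pos
  -- w^n / n! ≤ exp w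
  have h1 : w ^ n / (n.factorial : ℝ) ≤ Real.exp w := by
    have := Real.sum_le_exp_of_nonneg hw0 (n + 1)
    refine le_trans ?_ this
    have : w ^ n / (n.factorial : ℝ) = w ^ n / (n.factorial : ℝ) := rfl
    refine Finset.single_le_sum (f := fun i => w ^ i / (i.factorial : ℝ)) ?_ ?_
    · intro i _
      positivity
    · exact Finset.self_mem_range_succ n
  have h2 : (w ^ n / (n.factorial : ℝ)) ^ σ ≤ Real.exp w ^ σ :=
    Real.rpow_le_rpow (by positivity) h1 hσ.le
  have h3 : Real.exp w ^ σ = Real.exp (σ * b * A * t ^ (1 / σ)) := by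
    rw [← Real.exp_mul, hw]
    ring_nf
  -- compute (w^n / n!)^σ
  have h4 : (w ^ n / (n.factorial : ℝ)) ^ σ
      = (A * b) ^ (σ * (n : ℝ)) * (n.factorial : ℝ) ^ (-σ) * t ^ n := by
    have hwσ : w ^ σ = (A * b) ^ σ * t := by
      rw [hw, Real.mul_rpow (by positivity) (by positivity), ← Real.rpow_mul ht,
        one_div, inv_mul_cancel₀ hσ.ne', Real.rpow_one]
    have hwn : ((w ^ n : ℝ)) ^ σ = (A * b) ^ (σ * (n : ℝ)) * t ^ n := by
      rw [← Real.rpow_natCast w n, ← Real.rpow_mul hw0, mul_comm (n : ℝ) σ,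
        Real.rpow_mul hw0 σ (n : ℝ), hwσ, Real.rpow_natCast, mul_pow,
        ← Real.rpow_natCast ((A * b) ^ σ) n,
        ← Real.rpow_mul (by positivity : (0:ℝ) ≤ A * b)]
    rw [Real.div_rpow (by positivity) hfac.le, div_eq_mul_inv, ← Real.rpow_neg hfac.le, hwn]
    ring
  have h5 : A ^ (σ * (n : ℝ)) * (n.factorial : ℝ) ^ (-σ) * t ^ n
      = (b ^ (-σ)) ^ n * ((A * b) ^ (σ * (n : ℝ)) * (n.factorial : ℝ) ^ (-σ) * t ^ n) := by
    rw [Real.mul_rpow hA hb.le]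
    rw [← Real.rpow_natCast (b ^ (-σ)) n, ← Real.rpow_mul hb.le]
    rw [Real.rpow_mul hb.le σ (n : ℝ)]
    have : b ^ (-σ * (n : ℝ)) = (b ^ (σ * (n : ℝ)))⁻¹ := by
      rw [neg_mul, Real.rpow_neg hb.le]
    rw [neg_mul, Real.rpow_neg hb.le, Real.rpow_mul hb.le σ (n:ℝ)]
    have hbpos : (0:ℝ) < (b ^ σ) ^ (n : ℝ) := by
      apply Real.rpow_pos_of_pos (Real.rpow_pos_of_pos hb σ)
    field_simp
  rw [h5, ← h3]
  have hq : 0 ≤ (b ^ (-σ)) ^ n := pow_nonneg (Real.rpow_nonneg hb.le _) n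
  calc (b ^ (-σ)) ^ n * ((A * b) ^ (σ * (n : ℝ)) * (n.factorial : ℝ) ^ (-σ) * t ^ n)
      = (b ^ (-σ)) ^ n * (w ^ n / (n.factorial : ℝ)) ^ σ := by rw [h4]
    _ ≤ (b ^ (-σ)) ^ n * Real.exp w ^ σ := by
        exact mul_le_mul_of_nonneg_left h2 hq

theorem coeff_bound_implies_growth (d : ℕ) (τ : ℝ) (hτ : τ > -(1/2))
    (r₀ r : Fin d → ℝ) (hr₀ : ∀ j, 0 < r₀ j) (hlt : ∀ j, r₀ j < r j)
    (c : (Fin d → ℕ) → ℂ) (F : (Fin d → ℂ) → ℂ)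
    (hF : ∀ z : Fin d → ℂ,
      HasSum (fun α : Fin d → ℕ =>
        c α * (∏ j, (z j) ^ (α j)) / (Real.sqrt (∏ j, (Nat.factorial (α j) : ℝ)) : ℂ)) (F z))
    (C : ℝ)
    (hc : ∀ α : Fin d → ℕ,
      ‖c α‖ ≤ C * ∏ j, (2 * r₀ j / (2*τ+1)) ^ (((2*τ+1)/2) * (α j : ℝ))
                        * (Nat.factorial (α j) : ℝ) ^ (-τ)) :
    ∃ C' : ℝ, 0 < C' ∧ ∀ z : Fin d → ℂ,
      ‖F z‖ ≤ C' * Real.exp (∑ j, r j * ‖z j‖ ^ (2/(2*τ+1))) := by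
  have hσ : (0:ℝ) < τ + 1/2 := by linarith
  set σ : ℝ := τ + 1/2 with hσdef
  have h2τ : 2*τ+1 = 2*σ := by rw [hσdef]; ring
  have h2τpos : (0:ℝ) < 2*τ+1 := by rw [h2τ]; linarith
  set q : Fin d → ℝ := fun j => (r j / r₀ j) ^ (-σ) with hqdef
  have hq0 : ∀ j, 0 ≤ q j := fun j =>
    Real.rpow_nonneg (div_nonneg ((hr₀ j).trans (hlt j)).le (hr₀ j).le) _
  have hq1 : ∀ j, q j < 1 := fun j =>
    Real.rpow_lt_one_of_one_lt_of_neg ((one_lt_div (hr₀ j)).mpr (hlt j)) (by linarith)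
  have hS : Summable (fun α : Fin d → ℕ => ∏ j, q j ^ α j) :=
    summable_pi_geometric d q hq0 hq1
  set S : ℝ := ∑' α : Fin d → ℕ, ∏ j, q j ^ α j with hSdef
  have hS0 : 0 ≤ S :=
    tsum_nonneg fun α => Finset.prod_nonneg fun j _ => pow_nonneg (hq0 j) _
  have hC : 0 ≤ C := by
    have h0 := hc (fun _ => 0)
    simp at h0
    exact le_trans (norm_nonneg _) h0
  refine ⟨C * S + 1, by nlinarith [mul_nonneg hC hS0], fun z => ?_⟩
  set E : ℝ := ∑ j, r j * ‖z j‖ ^ (2/(2*τ+1)) with hEdef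
  have hfacpos : ∀ (m : ℕ), (0:ℝ) < (m.factorial : ℝ) := fun m => by
    exact_mod_cast m.factorial_pos
  have hkey : ∀ α : Fin d → ℕ,
      ‖c α * (∏ j, (z j) ^ (α j)) / (Real.sqrt (∏ j, (Nat.factorial (α j) : ℝ)) : ℂ)‖
        ≤ (C * Real.exp E) * ∏ j, q j ^ α j := by
    intro α
    have hsq : Real.sqrt (∏ j, ((α j).factorial : ℝ))
        = ∏ j, ((α j).factorial : ℝ) ^ ((1:ℝ)/2) := by
      rw [Real.sqrt_eq_rpow, ← Real.finset_prod_rpow _ _ (fun j _ => (hfacpos _).le)]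
    have hnorm : ‖c α * (∏ j, (z j) ^ (α j)) / (Real.sqrt (∏ j, (Nat.factorial (α j) : ℝ)) : ℂ)‖
        = ‖c α‖ * ∏ j, (‖z j‖ ^ (α j) * ((α j).factorial : ℝ) ^ (-(1/2) : ℝ)) := by
      rw [norm_div, norm_mul, Complex.norm_real, Real.norm_of_nonneg (Real.sqrt_nonneg _), hsq,
        norm_prod]
      simp_rw [norm_pow]
      rw [mul_div_assoc, ← Finset.prod_div_distrib]
      congr 1
      refine Finset.prod_congr rfl fun j _ => ?_
      rw [div_eq_mul_inv, ← Real.rpow_neg (hfacpos _).le]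
    have hper : ∀ j : Fin d,
        ((2 * r₀ j / (2*τ+1)) ^ (((2*τ+1)/2) * (α j : ℝ)) * ((α j).factorial : ℝ) ^ (-τ))
          * (‖z j‖ ^ (α j) * ((α j).factorial : ℝ) ^ (-(1/2) : ℝ))
          ≤ q j ^ (α j) * Real.exp (r j * ‖z j‖ ^ (2/(2*τ+1))) := by
      intro j
      have ht : 0 ≤ ‖z j‖ := norm_nonneg _
      have h1 := onedim_bound σ (r₀ j / σ) (r j / r₀ j) (‖z j‖) hσ
        (div_nonneg (hr₀ j).le hσ.le) (div_pos ((hr₀ j).trans (hlt j)) (hr₀ j)) ht (α j)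
      have e1 : 2 * r₀ j / (2*τ+1) = r₀ j / σ := by
        rw [h2τ]; field_simp
      have e2 : ((2*τ+1)/2) = σ := by rw [h2τ]; ring
      have e3 : σ * (r j / r₀ j) * (r₀ j / σ) = r j := by
        field_simp [hσ.ne', (hr₀ j).ne']
      have e4 : (1:ℝ)/σ = 2/(2*τ+1) := by
        rw [h2τ]; rw [eq_div_iff (by positivity)]; field_simp
      have e5 : ((α j).factorial:ℝ)^(-τ) * ((α j).factorial:ℝ)^(-(1/2):ℝ)
          = ((α j).factorial:ℝ)^(-σ) := by
        rw [← Real.rpow_add (hfacpos _)]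
        congr 1
        rw [hσdef]; ring
      have lhs_eq : ((2 * r₀ j / (2*τ+1)) ^ (((2*τ+1)/2) * (α j : ℝ)) * ((α j).factorial : ℝ) ^ (-τ))
          * (‖z j‖ ^ (α j) * ((α j).factorial : ℝ) ^ (-(1/2) : ℝ))
          = (r₀ j / σ) ^ (σ * (α j : ℝ)) * ((α j).factorial : ℝ) ^ (-σ)
            * ‖z j‖ ^ (α j) := by
        rw [e1, e2, ← e5]; ring
      rw [lhs_eq]
      refine le_trans h1 (le_of_eq ?_)
      rw [e3, e4]
    calc ‖c α * (∏ j, (z j) ^ (α j)) / (Real.sqrt (∏ j, (Nat.factorial (α j) : ℝ)) : ℂ)‖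
        = ‖c α‖ * ∏ j, (‖z j‖ ^ (α j) * ((α j).factorial : ℝ) ^ (-(1/2) : ℝ)) :=
          hnorm
      _ ≤ (C * ∏ j, (2 * r₀ j / (2*τ+1)) ^ (((2*τ+1)/2) * (α j : ℝ))
              * (Nat.factorial (α j) : ℝ) ^ (-τ))
            * ∏ j, (‖z j‖ ^ (α j) * ((α j).factorial : ℝ) ^ (-(1/2) : ℝ)) := by
          refine mul_le_mul_of_nonneg_right (hc α) ?_
          exact Finset.prod_nonneg fun j _ => by positivity
      _ = C * ∏ j, (((2 * r₀ j / (2*τ+1)) ^ (((2*τ+1)/2) * (α j : ℝ))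
              * (Nat.factorial (α j) : ℝ) ^ (-τ))
            * (‖z j‖ ^ (α j) * ((α j).factorial : ℝ) ^ (-(1/2) : ℝ))) := by
          rw [mul_assoc, ← Finset.prod_mul_distrib]
      _ ≤ C * ∏ j, (q j ^ (α j) * Real.exp (r j * ‖z j‖ ^ (2/(2*τ+1)))) := by
          refine mul_le_mul_of_nonneg_left ?_ hC
          refine Finset.prod_le_prod (fun j _ => ?_) (fun j _ => hper j)
          have h2r : (0:ℝ) ≤ 2 * r₀ j / (2*τ+1) :=
            (div_pos (by linarith [hr₀ j]) h2τpos).le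
          exact mul_nonneg
            (mul_nonneg (Real.rpow_nonneg h2r _) (Real.rpow_nonneg (hfacpos _).le _))
            (mul_nonneg (pow_nonneg (norm_nonneg _) _)
              (Real.rpow_nonneg (hfacpos _).le _))
      _ = (C * Real.exp E) * ∏ j, q j ^ α j := by
          rw [Finset.prod_mul_distrib, ← Real.exp_sum, hEdef]
          ring
  have hsum_norm : Summable (fun α : Fin d → ℕ =>
      ‖c α * (∏ j, (z j) ^ (α j)) / (Real.sqrt (∏ j, (Nat.factorial (α j) : ℝ)) : ℂ)‖) :=
    Summable.of_nonneg_of_le (fun α => norm_nonneg _) hkey (hS.mul_left (C * Real.exp E))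
  calc ‖F z‖
      = ‖∑' α : Fin d → ℕ,
          c α * (∏ j, (z j) ^ (α j)) / (Real.sqrt (∏ j, (Nat.factorial (α j) : ℝ)) : ℂ)‖ := by
        rw [(hF z).tsum_eq]
    _ ≤ ∑' α : Fin d → ℕ,
          ‖c α * (∏ j, (z j) ^ (α j)) / (Real.sqrt (∏ j, (Nat.factorial (α j) : ℝ)) : ℂ)‖ :=
        norm_tsum_le_tsum_norm hsum_norm
    _ ≤ ∑' α : Fin d → ℕ, (C * Real.exp E) * ∏ j, q j ^ α j :=
        Summable.tsum_le_tsum hkey hsum_norm (hS.mul_left _)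
    _ = (C * Real.exp E) * S := by rw [tsum_mul_left]
    _ ≤ (C * S + 1) * Real.exp E := by nlinarith [Real.exp_pos E, mul_nonneg hC hS0]
end

section
/- Let τ > -1/2 and 0 < r₀ < r coordinatewise in (0,∞)^d. Suppose F(z) = Σ_α c(α) z^α/√(α!) is entire on ℂ^d and satisfies |F(z)| ≲ exp(r_{0,1}|z_1|^{2/(2τ+1)} + ⋯ + r_{0,d}|z_d|^{2/(2τ+1)}). Then |c(α)| ≲ (2r/(2τ+1))^{((2τ+1)/2)·α} (α!)^{-τ} for all α ∈ ℕ^d. -/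
open Real

open MeasureTheory

lemma int1 (n m : ℕ) :
    ∫ t in Set.Ioc (0:ℝ) (2*π), Complex.exp ((((n:ℝ):ℂ) - (m:ℝ)) * t * Complex.I)
      = if n = m then ((2*π : ℝ) : ℂ) else 0 := by
  have h2π : (0:ℝ) ≤ 2*π := by positivity
  rw [← intervalIntegral.integral_of_le h2π]
  rcases eq_or_ne n m with h | h
  · subst h
    simp
  · have hc : (((n:ℝ):ℂ) - (m:ℝ)) * Complex.I ≠ 0 := by
      simp only [ne_eq, mul_eq_zero, Complex.I_ne_zero, or_false, sub_eq_zero]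
      exact_mod_cast fun hh => h (by exact_mod_cast hh)
    have key := integral_exp_mul_complex (a := 0) (b := 2*π) hc
    have heq : (fun t : ℝ => Complex.exp ((((n:ℝ):ℂ) - (m:ℝ)) * t * Complex.I))
        = fun t : ℝ => Complex.exp (((((n:ℝ):ℂ) - (m:ℝ)) * Complex.I) * t) := by
      funext t; ring_nf
    rw [heq, key]
    have h1 : Complex.exp ((((n:ℝ):ℂ) - (m:ℝ)) * Complex.I * (2*π)) = 1 := by
      have h2 := Complex.exp_int_mul_two_pi_mul_I ((n:ℤ) - m)
      convert h2 using 2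
      push_cast
      ring
    rw [if_neg h]
    push_cast at h1 ⊢
    rw [h1]
    simp

lemma cauchy_est (d : ℕ) (c : (Fin d → ℕ) → ℂ) (F : (Fin d → ℂ) → ℂ)
    (hF : ∀ z : Fin d → ℂ, HasSum (fun β : Fin d → ℕ =>
        c β * (∏ j, (z j) ^ (β j)) / (Real.sqrt (∏ j, (Nat.factorial (β j) : ℝ)) : ℂ)) (F z))
    (ρ : Fin d → ℝ) (hρ : ∀ j, 0 < ρ j) (M : ℝ)
    (hM : ∀ z : Fin d → ℂ, (∀ j, ‖z j‖ = ρ j) → ‖F z‖ ≤ M)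
    (α : Fin d → ℕ) :
    ‖c α‖ * ∏ j, ρ j ^ (α j) ≤ M * Real.sqrt (∏ j, (Nat.factorial (α j) : ℝ)) := by
  classical
  set T : Set (Fin d → ℝ) := Set.univ.pi fun _ => Set.Ioc (0:ℝ) (2*π) with hTdef
  have hT : MeasurableSet T := MeasurableSet.univ_pi fun _ => measurableSet_Ioc
  have hπ : (0:ℝ) < 2*π := by positivity
  have hvolT : volume T = (ENNReal.ofReal (2*π))^d := by
    rw [hTdef, volume_pi_pi]
    simp [Real.volume_Ioc]
  have hvolTr : (volume T).toReal = (2*π)^d := by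
    rw [hvolT, ENNReal.toReal_pow, ENNReal.toReal_ofReal hπ.le]
  have hvolTlt : volume T < ⊤ := by
    rw [hvolT]; exact ENNReal.pow_lt_top ENNReal.ofReal_lt_top
  -- basic positivity
  have hsq : ∀ β : Fin d → ℕ, (0:ℝ) < Real.sqrt (∏ j, (Nat.factorial (β j) : ℝ)) := by
    intro β
    apply Real.sqrt_pos.2
    apply Finset.prod_pos
    intro j _
    exact_mod_cast Nat.factorial_pos _
  -- the torus point
  set z : (Fin d → ℝ) → Fin d → ℂ := fun θ j => (ρ j : ℂ) * Complex.exp (θ j * Complex.I) with hzdef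
  have habs : ∀ θ j, ‖z θ j‖ = ρ j := by
    intro θ j
    simp [hzdef, Complex.norm_exp, abs_of_pos (hρ j)]
  -- coordinate factors
  set v : (Fin d → ℕ) → Fin d → ℝ → ℂ := fun β j =>
    (Set.Ioc (0:ℝ) (2*π)).indicator fun t =>
      ((ρ j : ℂ))^(β j) * Complex.exp ((((β j : ℝ):ℂ) - ((α j : ℝ):ℂ)) * t * Complex.I) with hvdef
  set g : (Fin d → ℕ) → (Fin d → ℝ) → ℂ := fun β θ =>
    (c β / (Real.sqrt (∏ j, (Nat.factorial (β j) : ℝ)) : ℂ)) * ∏ j, v β j (θ j) with hgdef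
  -- integrability of coordinate factors
  have hvint : ∀ β j, Integrable (v β j) := by
    intro β j
    apply IntegrableOn.integrable_indicator _ measurableSet_Ioc
    apply Continuous.integrableOn_Ioc
    fun_prop
  have hgint : ∀ β, Integrable (g β) := by
    intro β
    exact (Integrable.fintype_prod (fun j => hvint β j)).const_mul _
  -- value of coordinate integrals
  have hvval : ∀ β j, (∫ t, v β j t) =
      if β j = α j then ((2*π*(ρ j)^(α j) : ℝ) : ℂ) else 0 := by
    intro β j
    rw [hvdef]
    simp only
    rw [integral_indicator measurableSet_Ioc, MeasureTheory.integral_const_mul, int1]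
    by_cases h : β j = α j
    · rw [if_pos h, if_pos h, h]
      push_cast
      ring
    · rw [if_neg h, if_neg h, mul_zero]
  -- integral of g β
  have hgval : ∀ β, (∫ θ, g β θ) =
      (c β / (Real.sqrt (∏ j, (Nat.factorial (β j) : ℝ)) : ℂ)) *
        ∏ j, (if β j = α j then ((2*π*(ρ j)^(α j) : ℝ) : ℂ) else 0) := by
    intro β
    rw [hgdef]
    simp only
    rw [MeasureTheory.integral_const_mul]
    congr 1
    rw [MeasureTheory.integral_fintype_prod_volume_eq_prod (ι := Fin d) (f := fun j => v β j)]
    exact Finset.prod_congr rfl fun j _ => hvval β j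
  -- the product of exponentials with negative alpha
  set E : (Fin d → ℝ) → ℂ := fun θ => ∏ j, Complex.exp (-((α j : ℝ):ℂ) * θ j * Complex.I) with hEdef
  set G : (Fin d → ℝ) → ℂ := T.indicator (fun θ => F (z θ) * E θ) with hGdef
  have hEnorm : ∀ θ, ‖E θ‖ = 1 := by
    intro θ
    rw [hEdef]
    simp only
    rw [norm_prod]
    apply Finset.prod_eq_one
    intro j _
    rw [Complex.norm_exp]
    norm_num [Complex.mul_re, Complex.mul_im]
  -- pointwise HasSum
  have hptws : ∀ θ, HasSum (fun β => g β θ) (G θ) := by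
    intro θ
    by_cases hθ : θ ∈ T
    · have hθ' : ∀ j, θ j ∈ Set.Ioc (0:ℝ) (2*π) := by
        intro j
        exact hθ j (Set.mem_univ j)
      have hveq : ∀ β (j : Fin d), v β j (θ j)
          = (z θ j)^(β j) * Complex.exp (-((α j : ℝ):ℂ) * θ j * Complex.I) := by
        intro β j
        rw [hvdef]
        simp only
        rw [Set.indicator_of_mem (hθ' j), hzdef]
        simp only
        have harg : ((((β j : ℕ) : ℝ):ℂ) - (((α j : ℕ) : ℝ):ℂ)) * ((θ j : ℝ):ℂ) * Complex.I
            = ((β j : ℕ):ℂ) * (((θ j : ℝ):ℂ) * Complex.I)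
              + (-(((α j : ℕ) : ℝ):ℂ) * ((θ j : ℝ):ℂ) * Complex.I) := by
          push_cast
          ring
        rw [harg, Complex.exp_add, Complex.exp_nat_mul]
        ring
      have hgeq : ∀ β, g β θ
          = (c β * (∏ j, (z θ j) ^ (β j)) / (Real.sqrt (∏ j, (Nat.factorial (β j) : ℝ)) : ℂ)) * E θ := by
        intro β
        rw [hgdef]
        simp only
        rw [Finset.prod_congr rfl (fun j _ => hveq β j), Finset.prod_mul_distrib, hEdef]
        ring
      rw [hGdef, Set.indicator_of_mem hθ]
      exact HasSum.congr_fun ((hF (z θ)).mul_right (E θ)) (fun β => hgeq β)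
    · obtain ⟨j, hj⟩ : ∃ j, θ j ∉ Set.Ioc (0:ℝ) (2*π) := by
        by_contra hcon
        push_neg at hcon
        exact hθ (Set.mem_univ_pi.2 hcon)
      have hzero : (fun β => g β θ) = fun _ => 0 := by
        funext β
        have hv0 : v β j (θ j) = 0 := by
          simp only [hvdef]
          exact Set.indicator_of_notMem hj _
        rw [hgdef]
        simp only
        have hp0 : (∏ j', v β j' (θ j')) = (0:ℂ) :=
          Finset.prod_eq_zero (Finset.mem_univ j) hv0
        rw [hp0, mul_zero]
      rw [hzero, hGdef, Set.indicator_of_notMem hθ]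
      exact hasSum_zero
  -- norms of g β
  have hK : ∀ β : Fin d → ℕ, (fun θ => ‖g β θ‖)
      = T.indicator (fun _ => ‖c β‖ * (∏ j, (ρ j)^(β j)) / Real.sqrt (∏ j, (Nat.factorial (β j) : ℝ))) := by
    intro β
    funext θ
    by_cases hθ : θ ∈ T
    · rw [Set.indicator_of_mem hθ, hgdef]
      simp only
      rw [norm_mul, norm_prod]
      have h1 : ∀ j : Fin d, ‖v β j (θ j)‖ = (ρ j)^(β j) := by
        intro j
        rw [hvdef]
        simp only
        rw [Set.indicator_of_mem (hθ j (Set.mem_univ j)), norm_mul, norm_pow]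
        have : ‖Complex.exp ((((β j : ℝ):ℂ) - ((α j : ℝ):ℂ)) * (θ j) * Complex.I)‖ = 1 := by
          rw [Complex.norm_exp]
          norm_num [Complex.mul_re, Complex.mul_im]
        rw [this, mul_one, Complex.norm_real, Real.norm_of_nonneg (hρ j).le]
      rw [Finset.prod_congr rfl (fun j _ => h1 j)]
      rw [norm_div, Complex.norm_real, Real.norm_of_nonneg (hsq β).le]
      ring
    · rw [Set.indicator_of_notMem hθ]
      obtain ⟨j, hj⟩ : ∃ j, θ j ∉ Set.Ioc (0:ℝ) (2*π) := by
        by_contra hcon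
        push_neg at hcon
        exact hθ (Set.mem_univ_pi.2 hcon)
      have hv0 : v β j (θ j) = 0 := by
        simp only [hvdef]
        exact Set.indicator_of_notMem hj _
      rw [hgdef]
      simp only
      have hp0 : (∏ j', v β j' (θ j')) = (0:ℂ) :=
        Finset.prod_eq_zero (Finset.mem_univ j) hv0
      rw [hp0, mul_zero, norm_zero]
  have hintnorm : ∀ β : Fin d → ℕ, ∫ θ, ‖g β θ‖
      = (volume T).toReal * (‖c β‖ * (∏ j, (ρ j)^(β j)) / Real.sqrt (∏ j, (Nat.factorial (β j) : ℝ))) := by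
    intro β
    rw [hK β, MeasureTheory.integral_indicator_const _ hT, smul_eq_mul]
    rfl
  -- summability of the integrals of norms
  have hsummK : Summable (fun β : Fin d → ℕ =>
      ‖c β‖ * (∏ j, (ρ j)^(β j)) / Real.sqrt (∏ j, (Nat.factorial (β j) : ℝ))) := by
    have hs := (hF (fun j => ((ρ j : ℝ):ℂ))).summable
    have hs2 := summable_norm_iff.2 hs
    convert hs2 using 2 with β
    rw [norm_div, norm_mul, norm_prod, Complex.norm_real, Real.norm_of_nonneg (hsq β).le]
    congr 2
    exact Finset.prod_congr rfl fun j _ => by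
      rw [norm_pow, Complex.norm_real, Real.norm_of_nonneg (hρ j).le]
  have hsumm : Summable (fun β : Fin d → ℕ => ∫ θ, ‖g β θ‖) := by
    simp_rw [hintnorm]
    exact hsummK.mul_left _
  -- interchange sum and integral
  have hhs : HasSum (fun β => ∫ θ, g β θ) (∫ θ, G θ) := by
    have h := MeasureTheory.hasSum_integral_of_summable_integral_norm hgint hsumm
    have e : (∫ θ, G θ) = ∫ θ, ∑' i, g i θ :=
      congrArg _ (funext fun θ => ((hptws θ).tsum_eq).symm)
    rw [e]; exact h
  -- the sum collapses to the α term
  have hhs2 : HasSum (fun β => ∫ θ, g β θ) (∫ θ, g α θ) := by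
    apply hasSum_single α
    intro β hβ
    rw [hgval β]
    obtain ⟨j, hj⟩ := Function.ne_iff.1 hβ
    have h0 : (∏ j, if β j = α j then ((2*π*(ρ j)^(α j) : ℝ):ℂ) else 0) = 0 :=
      Finset.prod_eq_zero (Finset.mem_univ j) (if_neg hj)
    rw [h0, mul_zero]
  have hGeq : (∫ θ, G θ) = ∫ θ, g α θ := hhs.unique hhs2
  -- bound the integral of G
  have hM0 : 0 ≤ M := le_trans (norm_nonneg _)
    (hM (fun j => ((ρ j : ℝ):ℂ)) (fun j => by simp [abs_of_pos (hρ j)]))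
  have hGbound : ‖∫ θ, G θ‖ ≤ (volume T).toReal * M := by
    have hbint : Integrable (T.indicator (fun _ => M)) := by
      exact (integrableOn_const hvolTlt.ne).integrable_indicator hT
    have hble : ∀ θ, ‖G θ‖ ≤ T.indicator (fun _ => M) θ := by
      intro θ
      by_cases hθ : θ ∈ T
      · rw [hGdef, Set.indicator_of_mem hθ, Set.indicator_of_mem hθ, norm_mul, hEnorm, mul_one]
        exact hM (z θ) (habs θ)
      · rw [hGdef, Set.indicator_of_notMem hθ, Set.indicator_of_notMem hθ, norm_zero]
    calc ‖∫ θ, G θ‖ ≤ ∫ θ, T.indicator (fun _ => M) θ :=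
          norm_integral_le_of_norm_le hbint (Filter.Eventually.of_forall hble)
      _ = (volume T).toReal * M := by
          rw [MeasureTheory.integral_indicator_const _ hT, smul_eq_mul]
          rfl
  -- compute ∫ g α
  have hgα : (∫ θ, g α θ) = (c α / (Real.sqrt (∏ j, (Nat.factorial (α j) : ℝ)) : ℂ)) *
      ((((2*π)^d * ∏ j, (ρ j)^(α j) : ℝ)) : ℂ) := by
    rw [hgval α]
    congr 1
    rw [Finset.prod_congr rfl (fun j _ => if_pos rfl)]
    push_cast
    rw [Finset.prod_mul_distrib, Finset.prod_const]
    simp [Finset.card_univ]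
  have hfinal : ‖c α‖ / Real.sqrt (∏ j, (Nat.factorial (α j) : ℝ)) *
      ((2*π)^d * ∏ j, (ρ j)^(α j)) ≤ (2*π)^d * M := by
    have h1 : ‖∫ θ, G θ‖ = ‖c α‖ / Real.sqrt (∏ j, (Nat.factorial (α j) : ℝ)) *
        ((2*π)^d * ∏ j, (ρ j)^(α j)) := by
      rw [hGeq, hgα, norm_mul, norm_div, Complex.norm_real, Complex.norm_real,
        Real.norm_of_nonneg (hsq α).le]
      rw [Real.norm_of_nonneg (mul_nonneg (by positivity)
        (Finset.prod_nonneg fun j _ => pow_nonneg (hρ j).le _))]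
    rw [← h1, ← hvolTr]
    exact hGbound
  -- conclude
  have hP : (0:ℝ) < ∏ j, (ρ j)^(α j) := Finset.prod_pos fun j _ => pow_pos (hρ j) _
  have h2d : (0:ℝ) < (2*π)^d := by positivity
  have hX : ‖c α‖ / Real.sqrt (∏ j, (Nat.factorial (α j) : ℝ)) * (∏ j, (ρ j)^(α j)) ≤ M := by
    refine le_of_mul_le_mul_left ?_ h2d
    calc (2*π)^d * (‖c α‖ / Real.sqrt (∏ j, (Nat.factorial (α j) : ℝ)) * ∏ j, (ρ j)^(α j))
        = ‖c α‖ / Real.sqrt (∏ j, (Nat.factorial (α j) : ℝ)) * ((2*π)^d * ∏ j, (ρ j)^(α j)) := by ring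
      _ ≤ (2*π)^d * M := hfinal
  have hsqα := hsq α
  calc ‖c α‖ * ∏ j, ρ j ^ α j
      = (‖c α‖ / Real.sqrt (∏ j, (Nat.factorial (α j) : ℝ)) * (∏ j, (ρ j)^(α j))) *
        Real.sqrt (∏ j, (Nat.factorial (α j) : ℝ)) := by
        field_simp
    _ ≤ M * Real.sqrt (∏ j, (Nat.factorial (α j) : ℝ)) :=
        mul_le_mul_of_nonneg_right hX hsqα.le

lemma fact_le_stirlingish : ∀ n : ℕ, 1 ≤ n →
    (n.factorial : ℝ) * Real.exp 1 ^ n ≤ Real.exp 1 * (n:ℝ) ^ (n+1) := by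
  intro n hn
  induction n, hn using Nat.le_induction with
  | base => simp
  | succ n hn ih =>
    have hn0 : (0:ℝ) < (n:ℝ) := by exact_mod_cast hn
    have hE : (0:ℝ) < Real.exp (1/((n:ℝ)+1)) := Real.exp_pos _
    have hstep : Real.exp (1/((n:ℝ)+1)) ≤ ((n:ℝ)+1)/n := by
      have h1' : 1 - 1/((n:ℝ)+1) ≤ (Real.exp (1/((n:ℝ)+1)))⁻¹ := by
        rw [← Real.exp_neg]
        have := Real.add_one_le_exp (-(1/((n:ℝ)+1)))
        linarith
      have h2 : (1 - 1/((n:ℝ)+1)) * Real.exp (1/((n:ℝ)+1)) ≤ 1 := by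
        have := mul_le_mul_of_nonneg_right h1' hE.le
        rwa [inv_mul_cancel₀ (ne_of_gt hE)] at this
      have h3 : ((n:ℝ)+1) * ((1 - 1/((n:ℝ)+1)) * Real.exp (1/((n:ℝ)+1)))
          = (n:ℝ) * Real.exp (1/((n:ℝ)+1)) := by
        field_simp
        ring
      have h4 := mul_le_mul_of_nonneg_left h2 (by positivity : (0:ℝ) ≤ (n:ℝ)+1)
      rw [h3, mul_one] at h4
      rw [le_div_iff₀ hn0]
      linarith [h4]
    have hEpow : Real.exp (1/((n:ℝ)+1)) ^ (n+1) = Real.exp 1 := by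
      rw [← Real.exp_nat_mul]
      congr 1
      push_cast
      field_simp
    have hp := pow_le_pow_left₀ hE.le hstep (n+1)
    have hkey : Real.exp 1 * (n:ℝ)^(n+1) ≤ ((n:ℝ)+1)^(n+1) := by
      rw [← hEpow]
      calc Real.exp (1/((n:ℝ)+1)) ^ (n+1) * (n:ℝ)^(n+1)
          ≤ (((n:ℝ)+1)/n)^(n+1) * (n:ℝ)^(n+1) :=
            mul_le_mul_of_nonneg_right hp (by positivity)
        _ = ((n:ℝ)+1)^(n+1) := by
            rw [← mul_pow]
            congr 1
            field_simp
    have hfact : (((n+1).factorial : ℕ) : ℝ) = ((n:ℝ)+1) * (n.factorial : ℝ) := by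
      rw [Nat.factorial_succ]
      push_cast
      ring
    have hnn : (0:ℝ) ≤ ((n:ℝ)+1) := by positivity
    calc ((n+1).factorial : ℝ) * Real.exp 1 ^ (n+1)
        = ((n:ℝ)+1) * ((n.factorial:ℝ) * Real.exp 1 ^ n) * Real.exp 1 := by
          rw [hfact, pow_succ]
          ring
      _ ≤ ((n:ℝ)+1) * (Real.exp 1 * (n:ℝ)^(n+1)) * Real.exp 1 := by
          apply mul_le_mul_of_nonneg_right _ (Real.exp_pos 1).le
          exact mul_le_mul_of_nonneg_left ih hnn
      _ ≤ ((n:ℝ)+1) * (((n:ℝ)+1)^(n+1)) * Real.exp 1 := by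
          apply mul_le_mul_of_nonneg_right _ (Real.exp_pos 1).le
          exact mul_le_mul_of_nonneg_left hkey hnn
      _ = Real.exp 1 * ((n:ℝ)+1) ^ (n+1+1) := by ring
      _ = Real.exp 1 * ((n+1 : ℕ):ℝ) ^ (n+1+1) := by push_cast; ring

lemma coord_opt (τ a b : ℝ) (hτ : τ > -(1/2)) (ha : 0 < a) (hab : a < b) :
    ∃ K : ℝ, 0 < K ∧ ∀ n : ℕ, ∃ ρ : ℝ, 0 < ρ ∧
      Real.sqrt (n.factorial : ℝ) * Real.exp (a * ρ ^ ((2:ℝ)/(2*τ+1))) ≤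
        K * ρ ^ n * ((2*b/(2*τ+1)) ^ (((2*τ+1)/2) * (n:ℝ)) * ((n.factorial : ℝ)) ^ (-τ)) := by
  have hb : 0 < b := ha.trans hab
  set k : ℝ := 2*τ+1 with hkdef
  have hk : 0 < k := by rw [hkdef]; linarith
  set m : ℝ := k/2 with hmdef
  have hm : 0 < m := by positivity
  set θ : ℝ := a/b with hθdef
  have hθ1 : θ < 1 := (div_lt_one hb).2 hab
  have hθ0 : 0 < θ := div_pos ha hb
  set s : ℝ := (1-θ)*m with hsdef
  have hs : 0 < s := by
    apply mul_pos _ hm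
    linarith
  set Kv : ℝ := max (Real.exp a) (Real.exp 1 ^ m * (m/s) ^ m) with hKdef
  have hKpos : 0 < Kv := by
    apply lt_max_of_lt_left (Real.exp_pos a)
  refine ⟨Kv, hKpos, ?_⟩
  intro n
  rcases Nat.eq_zero_or_pos n with hn | hn
  · refine ⟨1, one_pos, ?_⟩
    subst hn
    simp only [Nat.factorial_zero, Nat.cast_one, Real.sqrt_one, Nat.cast_zero, mul_zero,
      pow_zero, Real.one_rpow, Real.rpow_zero, mul_one, one_mul]
    exact le_max_left _ _
  · have hn0 : (0:ℝ) < (n:ℝ) := by exact_mod_cast hn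
    set N : ℝ := (n.factorial : ℝ) with hNdef
    have hNpos : (0:ℝ) < N := by
      rw [hNdef]
      exact_mod_cast Nat.factorial_pos n
    set x : ℝ := k * n / (2*b) with hxdef
    have hx : 0 < x := by positivity
    refine ⟨x ^ m, Real.rpow_pos_of_pos hx m, ?_⟩
    have hexp1 : (x ^ m) ^ ((2:ℝ)/k) = x := by
      have hm2k : m * ((2:ℝ)/k) = 1 := by
        rw [hmdef]
        field_simp
      rw [← Real.rpow_mul hx.le, hm2k, Real.rpow_one]
    have hax : a * x = θ * (m * (n:ℝ)) := by
      rw [hxdef, hθdef, hmdef]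
      field_simp
    have hxb : x * (2*b/k) = (n:ℝ) := by
      rw [hxdef]
      field_simp
    have h2bk : (0:ℝ) ≤ 2*b/k := by positivity
    have hRHSeq : Kv * (x^m)^n * ((2*b/k)^(m*(n:ℝ)) * N^(-τ))
        = Kv * ((n:ℝ)^(m*(n:ℝ)) * N^(-τ)) := by
      rw [← Real.rpow_natCast (x^m) n, ← Real.rpow_mul hx.le]
      calc Kv * x^(m*(n:ℝ)) * ((2*b/k)^(m*(n:ℝ)) * N^(-τ))
          = Kv * ((x^(m*(n:ℝ)) * (2*b/k)^(m*(n:ℝ))) * N^(-τ)) := by ring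
        _ = Kv * ((x*(2*b/k))^(m*(n:ℝ)) * N^(-τ)) := by rw [← Real.mul_rpow hx.le h2bk]
        _ = Kv * ((n:ℝ)^(m*(n:ℝ)) * N^(-τ)) := by rw [hxb]
    -- Stirling-type bound
    have hsb : N ≤ Real.exp (1 - (n:ℝ)) * (n:ℝ)^(n+1) := by
      have h := fact_le_stirlingish n hn
      have hen : (0:ℝ) < Real.exp 1 ^ n := by positivity
      have hE : Real.exp (1 - (n:ℝ)) * (n:ℝ)^(n+1)
          = Real.exp 1 * (n:ℝ)^(n+1) / Real.exp 1 ^ n := by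
        rw [Real.exp_sub, ← Real.exp_one_rpow (n:ℝ), Real.rpow_natCast]
        ring
      rw [hNdef, hE, le_div_iff₀ hen]
      exact h
    have key1 : N^m ≤ Real.exp ((1-(n:ℝ))*m) * (n:ℝ)^(((n:ℝ)+1)*m) := by
      calc N^m ≤ (Real.exp (1-(n:ℝ)) * (n:ℝ)^(n+1))^m :=
            Real.rpow_le_rpow hNpos.le hsb hm.le
        _ = (Real.exp (1-(n:ℝ)))^m * ((n:ℝ)^(n+1))^m :=
            Real.mul_rpow (Real.exp_pos _).le (by positivity)
        _ = Real.exp ((1-(n:ℝ))*m) * (n:ℝ)^(((n:ℝ)+1)*m) := by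
            rw [← Real.exp_mul]
            congr 1
            rw [← Real.rpow_natCast (n:ℝ) (n+1), ← Real.rpow_mul hn0.le]
            push_cast
            ring_nf
    have key2 : (n:ℝ)^m ≤ (m/s)^m * Real.exp (s*(n:ℝ)) := by
      have hxe : (s/m)*(n:ℝ) ≤ Real.exp ((s/m)*(n:ℝ)) := by
        linarith [Real.add_one_le_exp ((s/m)*(n:ℝ))]
      have h5 : (n:ℝ) ≤ (m/s) * Real.exp ((s/m) * (n:ℝ)) := by
        calc (n:ℝ) = (m/s) * ((s/m)*(n:ℝ)) := by field_simp
          _ ≤ (m/s) * Real.exp ((s/m)*(n:ℝ)) :=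
              mul_le_mul_of_nonneg_left hxe (by positivity)
      calc (n:ℝ)^m ≤ ((m/s) * Real.exp ((s/m)*(n:ℝ)))^m :=
            Real.rpow_le_rpow hn0.le h5 hm.le
        _ = (m/s)^m * (Real.exp ((s/m)*(n:ℝ)))^m :=
            Real.mul_rpow (by positivity) (Real.exp_pos _).le
        _ = (m/s)^m * Real.exp (s*(n:ℝ)) := by
            rw [← Real.exp_mul]
            congr 1
            field_simp
    have hKbig : Real.exp ((1-(n:ℝ))*m) * Real.exp (θ*(m*(n:ℝ))) * (n:ℝ)^m
        ≤ Real.exp 1 ^ m * (m/s)^m := by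
      rw [← Real.exp_add]
      have harg : (1-(n:ℝ))*m + θ*(m*(n:ℝ)) = m - s*(n:ℝ) := by
        rw [hsdef]
        ring
      rw [harg]
      calc Real.exp (m - s*(n:ℝ)) * (n:ℝ)^m
          ≤ Real.exp (m - s*(n:ℝ)) * ((m/s)^m * Real.exp (s*(n:ℝ))) :=
            mul_le_mul_of_nonneg_left key2 (Real.exp_pos _).le
        _ = Real.exp m * (m/s)^m := by
            rw [Real.exp_sub]
            field_simp
        _ = Real.exp 1 ^ m * (m/s)^m := by rw [Real.exp_one_rpow]
    have keyMain : N^m * Real.exp (θ*(m*(n:ℝ))) ≤ Kv * (n:ℝ)^(m*(n:ℝ)) := by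
      have hsplit : (n:ℝ)^(((n:ℝ)+1)*m) = (n:ℝ)^(m*(n:ℝ)) * (n:ℝ)^m := by
        rw [← Real.rpow_add hn0]
        ring_nf
      calc N^m * Real.exp (θ*(m*(n:ℝ)))
          ≤ (Real.exp ((1-(n:ℝ))*m) * (n:ℝ)^(((n:ℝ)+1)*m)) * Real.exp (θ*(m*(n:ℝ))) :=
            mul_le_mul_of_nonneg_right key1 (Real.exp_pos _).le
        _ = (Real.exp ((1-(n:ℝ))*m) * Real.exp (θ*(m*(n:ℝ))) * (n:ℝ)^m) * (n:ℝ)^(m*(n:ℝ)) := by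
            rw [hsplit]
            ring
        _ ≤ (Real.exp 1 ^ m * (m/s)^m) * (n:ℝ)^(m*(n:ℝ)) :=
            mul_le_mul_of_nonneg_right hKbig (Real.rpow_nonneg hn0.le _)
        _ ≤ Kv * (n:ℝ)^(m*(n:ℝ)) :=
            mul_le_mul_of_nonneg_right (le_max_right _ _) (Real.rpow_nonneg hn0.le _)
    -- assemble
    rw [hexp1, hax, hRHSeq]
    have hhalf : (1/2 : ℝ) = m + (-τ) := by
      rw [hmdef, hkdef]
      ring
    rw [Real.sqrt_eq_rpow, hhalf, Real.rpow_add hNpos]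
    calc N^m * N^(-τ) * Real.exp (θ*(m*(n:ℝ)))
        = (N^m * Real.exp (θ*(m*(n:ℝ)))) * N^(-τ) := by ring
      _ ≤ (Kv * (n:ℝ)^(m*(n:ℝ))) * N^(-τ) :=
          mul_le_mul_of_nonneg_right keyMain (Real.rpow_nonneg hNpos.le _)
      _ = Kv * ((n:ℝ)^(m*(n:ℝ)) * N^(-τ)) := by ring

theorem growth_implies_coeff_bound (d : ℕ) (τ : ℝ) (hτ : τ > -(1/2))
    (r₀ r : Fin d → ℝ) (hr₀ : ∀ j, 0 < r₀ j) (hlt : ∀ j, r₀ j < r j)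
    (c : (Fin d → ℕ) → ℂ) (F : (Fin d → ℂ) → ℂ)
    (hF : ∀ z : Fin d → ℂ,
      HasSum (fun α : Fin d → ℕ =>
        c α * (∏ j, (z j) ^ (α j)) / (Real.sqrt (∏ j, (Nat.factorial (α j) : ℝ)) : ℂ)) (F z))
    (C : ℝ)
    (hFbound : ∀ z : Fin d → ℂ,
      ‖F z‖ ≤ C * Real.exp (∑ j, r₀ j * ‖z j‖ ^ (2/(2*τ+1)))) :
    ∃ C' : ℝ, 0 < C' ∧ ∀ α : Fin d → ℕ,
      ‖c α‖ ≤ C' * ∏ j, (2 * r j / (2*τ+1)) ^ (((2*τ+1)/2) * (α j : ℝ))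
                        * (Nat.factorial (α j) : ℝ) ^ (-τ) := by
  classical
  set C'' : ℝ := max C 1 with hC''def
  have hC'' : (0:ℝ) < C'' := lt_max_of_lt_right one_pos
  choose K hKpos hKn using fun j => coord_opt τ (r₀ j) (r j) hτ (hr₀ j) (hlt j)
  choose ρf hρfpos hρfineq using fun (j : Fin d) (n : ℕ) => hKn j n
  have hKprod : (0:ℝ) < ∏ j, K j := Finset.prod_pos fun j _ => hKpos j
  refine ⟨C'' * ∏ j, K j, mul_pos hC'' hKprod, ?_⟩
  intro α
  set ρ : Fin d → ℝ := fun j => ρf j (α j) with hρdef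
  have hρpos : ∀ j, 0 < ρ j := fun j => hρfpos j (α j)
  set M : ℝ := C'' * Real.exp (∑ j, r₀ j * (ρ j) ^ ((2:ℝ)/(2*τ+1))) with hMdef
  have hM : ∀ z : Fin d → ℂ, (∀ j, ‖z j‖ = ρ j) → ‖F z‖ ≤ M := by
    intro z hz
    calc ‖F z‖ ≤ C * Real.exp (∑ j, r₀ j * ‖z j‖ ^ (2/(2*τ+1))) := hFbound z
      _ = C * Real.exp (∑ j, r₀ j * (ρ j) ^ ((2:ℝ)/(2*τ+1))) := by
          congr 2
          exact Finset.sum_congr rfl fun j _ => by rw [hz j]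
      _ ≤ M := by
          rw [hMdef]
          exact mul_le_mul_of_nonneg_right (le_max_left C 1) (Real.exp_pos _).le
  have hce := cauchy_est d c F hF ρ hρpos M hM α
  have hsqprod : Real.sqrt (∏ j, (Nat.factorial (α j) : ℝ))
      = ∏ j, Real.sqrt ((Nat.factorial (α j) : ℝ)) := by
    rw [Real.sqrt_eq_rpow]
    rw [← Real.finset_prod_rpow Finset.univ _ (fun j _ => by positivity) ((1:ℝ)/2)]
    exact Finset.prod_congr rfl fun j _ => (Real.sqrt_eq_rpow _).symm
  have hMeq : M * Real.sqrt (∏ j, (Nat.factorial (α j) : ℝ))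
      = C'' * ∏ j, (Real.sqrt ((Nat.factorial (α j) : ℝ)) *
          Real.exp (r₀ j * (ρ j) ^ ((2:ℝ)/(2*τ+1)))) := by
    rw [hMdef, Real.exp_sum, hsqprod, Finset.prod_mul_distrib]
    ring
  have hcoord : ∀ j : Fin d, Real.sqrt ((Nat.factorial (α j) : ℝ)) *
      Real.exp (r₀ j * (ρ j) ^ ((2:ℝ)/(2*τ+1)))
      ≤ K j * (ρ j) ^ (α j) * ((2 * r j / (2*τ+1)) ^ (((2*τ+1)/2) * ((α j) : ℝ))
          * ((Nat.factorial (α j) : ℝ)) ^ (-τ)) := fun j => hρfineq j (α j)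
  have hprodle : (∏ j, (Real.sqrt ((Nat.factorial (α j) : ℝ)) *
        Real.exp (r₀ j * (ρ j) ^ ((2:ℝ)/(2*τ+1)))))
      ≤ ∏ j, (K j * (ρ j) ^ (α j) * ((2 * r j / (2*τ+1)) ^ (((2*τ+1)/2) * ((α j) : ℝ))
          * ((Nat.factorial (α j) : ℝ)) ^ (-τ))) := by
    apply Finset.prod_le_prod
    · intro j _
      positivity
    · intro j _
      exact hcoord j
  have hsplit : (∏ j, (K j * (ρ j) ^ (α j) * ((2 * r j / (2*τ+1)) ^ (((2*τ+1)/2) * ((α j) : ℝ))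
          * ((Nat.factorial (α j) : ℝ)) ^ (-τ))))
      = (∏ j, K j) * (∏ j, (ρ j) ^ (α j)) *
        ∏ j, ((2 * r j / (2*τ+1)) ^ (((2*τ+1)/2) * ((α j) : ℝ))
          * ((Nat.factorial (α j) : ℝ)) ^ (-τ)) := by
    rw [← Finset.prod_mul_distrib, ← Finset.prod_mul_distrib]
  have hP : (0:ℝ) < ∏ j, (ρ j) ^ (α j) := Finset.prod_pos fun j _ => pow_pos (hρpos j) _
  have hchain : ‖c α‖ * ∏ j, (ρ j) ^ (α j)
      ≤ (C'' * (∏ j, K j) *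
          ∏ j, ((2 * r j / (2*τ+1)) ^ (((2*τ+1)/2) * ((α j) : ℝ))
            * ((Nat.factorial (α j) : ℝ)) ^ (-τ))) * ∏ j, (ρ j) ^ (α j) := by
    calc ‖c α‖ * ∏ j, (ρ j) ^ (α j)
        ≤ M * Real.sqrt (∏ j, (Nat.factorial (α j) : ℝ)) := hce
      _ = C'' * ∏ j, (Real.sqrt ((Nat.factorial (α j) : ℝ)) *
            Real.exp (r₀ j * (ρ j) ^ ((2:ℝ)/(2*τ+1)))) := hMeq
      _ ≤ C'' * ((∏ j, K j) * (∏ j, (ρ j) ^ (α j)) *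
            ∏ j, ((2 * r j / (2*τ+1)) ^ (((2*τ+1)/2) * ((α j) : ℝ))
              * ((Nat.factorial (α j) : ℝ)) ^ (-τ))) := by
          rw [← hsplit]
          exact mul_le_mul_of_nonneg_left hprodle hC''.le
      _ = (C'' * (∏ j, K j) *
            ∏ j, ((2 * r j / (2*τ+1)) ^ (((2*τ+1)/2) * ((α j) : ℝ))
              * ((Nat.factorial (α j) : ℝ)) ^ (-τ))) * ∏ j, (ρ j) ^ (α j) := by ring
  exact le_of_mul_le_mul_right hchain hP
end

section
/- Let s ∈ (0,1/2) and 0 < r₀ < r (in ℝ_+, one dimension). If F(z) = Σ_{α∈ℕ} c(α) z^α/√(α!) is entire on ℂ and satisfies |F(z)| ≲ e^{r₀(log(1+|z|))^{1/(1-2s)}}, then |c(α)| ≲ e^{-R α^{1/(2s)}} for all α ∈ ℕ, where R = s((1-2s)/r)^{(1-2s)/(2s)}. -/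
open Real Filter


private lemma exp_le_one_add_mul_exp {t : ℝ} (ht : 0 ≤ t) :
    Real.exp t ≤ 1 + t * Real.exp t := by
  have h1 : -t + 1 ≤ Real.exp (-t) := Real.add_one_le_exp (-t)
  have h2 : Real.exp (-t) * Real.exp t = 1 := by rw [← Real.exp_add]; simp
  nlinarith [Real.exp_pos t]

private lemma rpow_add_one_le {T β : ℝ} (hT : 1 ≤ T) (hβ : 0 < β) :
    (T + 1) ^ β ≤ T ^ β + β * Real.exp β * T ^ (β - 1) := by
  have hT0 : 0 < T := lt_of_lt_of_le one_pos hT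
  have h2 : (0:ℝ) < 1 + 1/T := by positivity
  have h3 : (T + 1) ^ β = T ^ β * (1 + 1/T) ^ β := by
    rw [← Real.mul_rpow hT0.le h2.le]
    congr 1
    field_simp
  have hlog : Real.log (1 + 1/T) ≤ 1/T := by
    have := Real.log_le_sub_one_of_pos h2; linarith
  have h4 : (1 + 1/T) ^ β ≤ Real.exp (β / T) := by
    rw [Real.rpow_def_of_pos h2]
    apply Real.exp_le_exp.2
    calc Real.log (1 + 1/T) * β ≤ (1/T) * β :=
          mul_le_mul_of_nonneg_right hlog hβ.le
      _ = β / T := by ring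
  have h5 : Real.exp (β / T) ≤ 1 + (β / T) * Real.exp β := by
    have hu : (0:ℝ) ≤ β / T := by positivity
    have := exp_le_one_add_mul_exp hu
    have hm : Real.exp (β / T) ≤ Real.exp β := by
      apply Real.exp_le_exp.2
      rw [div_le_iff₀ hT0]; nlinarith
    nlinarith
  have h6 : T ^ β * (β / T) = β * T ^ (β - 1) := by
    rw [Real.rpow_sub hT0, Real.rpow_one]; field_simp
  calc (T + 1) ^ β ≤ T ^ β * (1 + (β / T) * Real.exp β) := by
        rw [h3]
        exact mul_le_mul_of_nonneg_left (h4.trans h5) (Real.rpow_nonneg hT0.le β)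
    _ = T ^ β + (T ^ β * (β / T)) * Real.exp β := by ring
    _ = T ^ β + β * Real.exp β * T ^ (β - 1) := by rw [h6]; ring

private lemma sqrt_factorial_le (α : ℕ) :
    Real.sqrt (Nat.factorial α) ≤ Real.exp (((α:ℝ) / 2) * Real.log ((α:ℝ) + 1)) := by
  have h1 : ((Nat.factorial α : ℕ) : ℝ) ≤ ((α:ℝ) + 1) ^ (α : ℕ) := by
    calc ((Nat.factorial α : ℕ) : ℝ) ≤ ((α ^ α : ℕ) : ℝ) := by
          exact_mod_cast Nat.cast_le.2 (Nat.factorial_le_pow α)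
      _ ≤ ((α:ℝ) + 1) ^ (α : ℕ) := by
          push_cast
          exact pow_le_pow_left₀ (by positivity) (by linarith) α
  have h2 : ((α:ℝ) + 1) ^ (α : ℕ) = Real.exp ((α:ℝ) * Real.log ((α:ℝ) + 1)) := by
    rw [← Real.exp_log (show (0:ℝ) < (α:ℝ)+1 by positivity), ← Real.exp_nat_mul]
    rw [Real.log_exp]
  rw [show (((α:ℝ))/2) * Real.log ((α:ℝ)+1) = ((α:ℝ) * Real.log ((α:ℝ)+1))/2 by ring]
  have h3 : Real.sqrt (Nat.factorial α) ≤ Real.sqrt (Real.exp ((α:ℝ) * Real.log ((α:ℝ)+1))) :=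
    Real.sqrt_le_sqrt (by rw [← h2]; exact h1)
  refine h3.trans_eq ?_
  rw [Real.sqrt_eq_rpow, ← Real.exp_mul]
  ring_nf

private lemma coeff_bound (c : ℕ → ℂ) (F : ℂ → ℂ)
    (hF : ∀ z : ℂ, HasSum (fun α : ℕ =>
      (c α / (Real.sqrt (Nat.factorial α : ℝ) : ℂ)) * z ^ α) (F z))
    {R : ℝ} (hR : 0 < R) {M : ℝ}
    (hM : ∀ z : ℂ, ‖z‖ = R → ‖F z‖ ≤ M) (α : ℕ) :
    ‖c α‖ ≤ Real.sqrt (Nat.factorial α : ℝ) * M / R ^ α := by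
  set a : ℕ → ℂ := fun n => c n / (Real.sqrt (Nat.factorial n : ℝ) : ℂ) with ha
  set p := FormalMultilinearSeries.ofScalars ℂ a with hp
  have hpnorm : ∀ n, ‖p n‖ = ‖a n‖ := fun n =>
    FormalMultilinearSeries.ofScalars_norm ℂ a n
  have hsq_pos : ∀ n : ℕ, (0:ℝ) < Real.sqrt (Nat.factorial n : ℝ) := fun n =>
    Real.sqrt_pos.2 (by exact_mod_cast (Nat.factorial_pos n))
  -- radius is ⊤
  have hrad : p.radius = ⊤ := by
    refine eq_top_iff.2 (ENNReal.le_of_forall_nnreal_lt fun q _ => ?_)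
    apply p.le_radius_of_tendsto (l := 0)
    have hs := (hF ((q:ℝ) : ℂ)).summable.tendsto_atTop_zero.norm
    simp only [norm_zero] at hs
    refine hs.congr fun n => ?_
    rw [norm_mul, norm_pow, Complex.norm_real, Real.norm_eq_abs,
      abs_of_nonneg (NNReal.coe_nonneg q), hpnorm]
  -- F = p.sum
  have hFeq : F = p.sum := by
    funext z
    have h1 : HasSum (fun n => p n fun _ => z) (F z) := by
      refine (hF z).congr_fun fun n => ?_
      rw [hp, FormalMultilinearSeries.ofScalars_apply_eq, smul_eq_mul]
    exact h1.tsum_eq.symm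
  have hFp : HasFPowerSeriesOnBall F p 0 ⊤ := by
    rw [hFeq]
    have := p.hasFPowerSeriesOnBall (by rw [hrad]; exact ENNReal.zero_lt_top)
    rwa [hrad] at this
  have hdiff : Differentiable ℂ F := fun z => by
    have hz : z ∈ Metric.eball (0:ℂ) ⊤ := Metric.mem_eball.2 (edist_lt_top _ _)
    exact (hFp.differentiableOn z hz).differentiableAt
      (Metric.isOpen_eball.mem_nhds hz)
  -- Cauchy power series
  set R' : NNReal := ⟨R, hR.le⟩ with hR'
  have hR'0 : 0 < R' := by exact_mod_cast hR
  have hq : HasFPowerSeriesOnBall F (cauchyPowerSeries F 0 R') 0 ⊤ :=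
    hdiff.hasFPowerSeriesOnBall 0 hR'0
  have hpq : p = cauchyPowerSeries F 0 R' :=
    hFp.hasFPowerSeriesAt.eq_formalMultilinearSeries hq.hasFPowerSeriesAt
  -- estimate
  have hcont : Continuous fun θ : ℝ => ‖F (circleMap 0 R θ)‖ :=
    (hdiff.continuous.comp (continuous_circleMap 0 R)).norm
  have hMnonneg : 0 ≤ M := le_trans (norm_nonneg _)
    (hM (circleMap 0 R 0) (by rw [norm_circleMap_zero, abs_of_pos hR]))
  have hint : (∫ θ : ℝ in (0)..2 * π, ‖F (circleMap 0 R θ)‖) ≤ 2 * π * M := by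
    have := intervalIntegral.integral_mono_on (μ := MeasureTheory.volume) (a := 0) (b := 2*π)
      (by positivity) (hcont.intervalIntegrable 0 (2*π))
      (intervalIntegrable_const (c := M))
      (fun θ _ => hM _ (by rw [norm_circleMap_zero, abs_of_pos hR]))
    simpa using this
  have hbound : ‖p α‖ ≤ M * (R⁻¹) ^ α := by
    have h1 := norm_cauchyPowerSeries_le F 0 (R' : ℝ) α
    rw [← hpq] at h1
    refine h1.trans ?_
    have h2 : ((2 * π)⁻¹ * ∫ θ : ℝ in (0)..2 * π, ‖F (circleMap 0 (R':ℝ) θ)‖) ≤ M := by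
      rw [inv_mul_le_iff₀ (by positivity)]
      calc (∫ θ : ℝ in (0)..2 * π, ‖F (circleMap 0 R θ)‖) ≤ 2 * π * M := hint
        _ = 2 * π * M := rfl
    calc ((2 * π)⁻¹ * ∫ θ : ℝ in (0)..2 * π, ‖F (circleMap 0 (R':ℝ) θ)‖) * |(R':ℝ)|⁻¹ ^ α
        ≤ M * |(R':ℝ)|⁻¹ ^ α := by
          exact mul_le_mul_of_nonneg_right h2 (by positivity)
      _ = M * (R⁻¹) ^ α := by
          rw [abs_of_pos (show (0:ℝ) < (R':ℝ) from hR)]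
          norm_num [hR']
          exact Or.inl rfl
  -- conclude
  have hnorm_a : ‖a α‖ = ‖c α‖ / Real.sqrt (Nat.factorial α : ℝ) := by
    rw [ha]
    simp only [norm_div, Complex.norm_real, Real.norm_eq_abs,
      abs_of_pos (hsq_pos α)]
  have := (hpnorm α) ▸ hbound
  rw [hnorm_a, div_le_iff₀ (hsq_pos α)] at this
  calc ‖c α‖ ≤ M * R⁻¹ ^ α * Real.sqrt (Nat.factorial α : ℝ) := this
    _ = Real.sqrt (Nat.factorial α : ℝ) * M / R ^ α := by
      rw [inv_pow]; field_simp

private lemma eventual_exponent (s r₀ r : ℝ) (hs0 : 0 < s) (hs2 : s < 1/2)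
    (hr₀ : 0 < r₀) (hlt : r₀ < r) :
    ∀ᶠ α : ℕ in atTop,
      ((α:ℝ)/2) * Real.log ((α:ℝ)+1)
        + r₀ * ((((1-2*s)/r) ^ ((1-2*s)/(2*s))) * (α:ℝ) ^ ((1-2*s)/(2*s)) + 1) ^ (1/(1-2*s))
        + s * (((1-2*s)/r) ^ ((1-2*s)/(2*s))) * (α:ℝ) ^ (1/(2*s))
      ≤ (α:ℝ) * ((((1-2*s)/r) ^ ((1-2*s)/(2*s))) * (α:ℝ) ^ ((1-2*s)/(2*s))) := by
  have h12 : (0:ℝ) < 1 - 2*s := by linarith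
  have hr : (0:ℝ) < r := hr₀.trans hlt
  set b : ℝ := (1-2*s)/(2*s) with hb
  set β : ℝ := 1/(1-2*s) with hβ
  set x0 : ℝ := (1-2*s)/r with hx0def
  have hx0 : 0 < x0 := by positivity
  set K : ℝ := x0 ^ b with hK
  have hb0 : 0 < b := by rw [hb]; positivity
  have hβ0 : 0 < β := by rw [hβ]; positivity
  have hK0 : 0 < K := Real.rpow_pos_of_pos hx0 b
  have hs0' : s ≠ 0 := ne_of_gt hs0
  have h12' : (1:ℝ) - 2*s ≠ 0 := ne_of_gt h12
  have hbβ : b * β = 1/(2*s) := by rw [hb, hβ]; field_simp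
  have h1b : 1 + b = 1/(2*s) := by rw [hb]; field_simp; ring
  have hbβ1 : b * (β - 1) = 1 := by rw [hb, hβ]; field_simp; ring
  set D : ℝ := r₀ * (β * Real.exp β * K ^ (β - 1)) with hD
  have hKβ : r₀ * K ^ β ≤ (1-2*s) * K := by
    have e : K ^ β = x0 * K := by
      rw [hK, ← Real.rpow_mul hx0.le, hbβ, ← h1b, Real.rpow_add hx0, Real.rpow_one]
    rw [e]
    calc r₀ * (x0 * K) = (r₀ / r) * ((1-2*s) * K) := by rw [hx0def]; field_simp
      _ ≤ 1 * ((1-2*s) * K) := by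
          apply mul_le_mul_of_nonneg_right _ (by positivity)
          rw [div_le_one hr]; exact hlt.le
      _ = (1-2*s) * K := one_mul _
  -- eventual real inequality
  have evA : ∀ᶠ x : ℝ in atTop, Real.log x ≤ (s*K) * x ^ b := by
    have h := (isLittleO_log_rpow_atTop hb0).def (show (0:ℝ) < s*K by positivity)
    filter_upwards [h, eventually_ge_atTop (1:ℝ)] with x hx hx1
    calc Real.log x ≤ ‖Real.log x‖ := le_abs_self _
      _ ≤ s*K * ‖x ^ b‖ := hx
      _ = s*K * x ^ b := by
          rw [Real.norm_eq_abs, abs_of_nonneg (Real.rpow_nonneg (by linarith) b)]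
  have evB : ∀ᶠ x : ℝ in atTop, (1/2)*Real.log 2 + D ≤ (s*K/2) * x ^ b :=
    ((tendsto_rpow_atTop hb0).const_mul_atTop (show (0:ℝ) < s*K/2 by positivity)).eventually_ge_atTop _
  have h3real : ∀ᶠ x : ℝ in atTop, (1/2)*Real.log (x+1) + D ≤ s*K * x ^ b := by
    filter_upwards [evA, evB, eventually_ge_atTop (1:ℝ)] with x hA hB hx1
    have hx0' : (0:ℝ) < x := by linarith
    have hlog : Real.log (x+1) ≤ Real.log 2 + Real.log x := by
      rw [← Real.log_mul (by norm_num) (ne_of_gt hx0')]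
      exact Real.log_le_log (by linarith) (by linarith)
    nlinarith [hA, hB]
  have h3 := tendsto_natCast_atTop_atTop.eventually h3real
  have h2 : ∀ᶠ α : ℕ in atTop, 1 ≤ K * (α:ℝ) ^ b := by
    have ht : Tendsto (fun α : ℕ => K * (α:ℝ) ^ b) atTop atTop :=
      ((tendsto_rpow_atTop hb0).const_mul_atTop hK0).comp tendsto_natCast_atTop_atTop
    exact ht.eventually_ge_atTop 1
  filter_upwards [tendsto_natCast_atTop_atTop.eventually_ge_atTop (1:ℝ), h2, h3]
    with α hx1 hT1 h3x
  set x : ℝ := (α:ℝ) with hx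
  have hx0' : (0:ℝ) < x := by linarith
  set T : ℝ := K * x ^ b with hT
  set X : ℝ := x ^ (1/(2*s)) with hX
  have hXnn : 0 ≤ X := Real.rpow_nonneg hx0'.le _
  have eX : X = x * x ^ b := by
    rw [hX, ← h1b, Real.rpow_add hx0', Real.rpow_one]
  have e1 : (T+1) ^ β ≤ T ^ β + β * Real.exp β * T ^ (β-1) := rpow_add_one_le hT1 hβ0
  have e2 : T ^ β = K ^ β * X := by
    rw [hT, Real.mul_rpow hK0.le (Real.rpow_nonneg hx0'.le b),
      ← Real.rpow_mul hx0'.le, hbβ, hX]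
  have e3 : T ^ (β-1) = K ^ (β-1) * x := by
    rw [hT, Real.mul_rpow hK0.le (Real.rpow_nonneg hx0'.le b),
      ← Real.rpow_mul hx0'.le, hbβ1, Real.rpow_one]
  have g1 : r₀ * (T+1) ^ β ≤ r₀ * K ^ β * X + D * x := by
    have h := mul_le_mul_of_nonneg_left e1 hr₀.le
    rw [e2, e3] at h
    calc r₀ * (T+1) ^ β ≤ r₀ * (K ^ β * X + β * Real.exp β * (K ^ (β-1) * x)) := h
      _ = r₀ * K ^ β * X + D * x := by rw [hD]; ring
  have g2 : r₀ * K ^ β * X ≤ (1-2*s) * K * X :=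
    mul_le_mul_of_nonneg_right hKβ hXnn
  have g3 : x * ((1/2)*Real.log (x+1) + D) ≤ s * K * X := by
    have h := mul_le_mul_of_nonneg_left h3x hx0'.le
    calc x * ((1/2)*Real.log (x+1) + D) ≤ x * (s*K * x ^ b) := h
      _ = s * K * X := by rw [eX]; ring
  have e4 : x * T = K * X := by rw [hT, eX]; ring
  nlinarith [g1, g2, g3, e4]

theorem log_growth_implies_coeff_decay (s r₀ r : ℝ)
    (hs : 0 < s ∧ s < 1/2) (hr₀ : 0 < r₀) (hlt : r₀ < r)
    (c : ℕ → ℂ) (F : ℂ → ℂ)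
    (hF : ∀ z : ℂ,
      HasSum (fun α : ℕ => c α * z ^ α / (Real.sqrt (Nat.factorial α : ℝ) : ℂ)) (F z))
    (C : ℝ)
    (hFbound : ∀ z : ℂ,
      ‖F z‖ ≤ C * Real.exp (r₀ * (Real.log (1 + ‖z‖)) ^ (1/(1-2*s)))) :
    ∃ C' : ℝ, 0 < C' ∧ ∀ α : ℕ,
      ‖c α‖ ≤ C' * Real.exp (-(s * ((1-2*s)/r) ^ ((1-2*s)/(2*s)) * (α:ℝ) ^ (1/(2*s)))) := by
  obtain ⟨hs0, hs2⟩ := hs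
  have h12 : (0:ℝ) < 1 - 2*s := by linarith
  have hr : (0:ℝ) < r := hr₀.trans hlt
  set K : ℝ := ((1-2*s)/r) ^ ((1-2*s)/(2*s)) with hKdef
  have hK0 : 0 < K := Real.rpow_pos_of_pos (by positivity) _
  have hF' : ∀ z : ℂ, HasSum (fun α : ℕ =>
      (c α / (Real.sqrt (Nat.factorial α : ℝ) : ℂ)) * z ^ α) (F z) := fun z =>
    (hF z).congr_fun fun n => (div_mul_eq_mul_div _ _ _)
  obtain ⟨N, hN⟩ := eventually_atTop.1 (eventual_exponent s r₀ r hs0 hs2 hr₀ hlt)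
  set C₀ : ℝ := max C 1 with hC₀
  have hC₀0 : (0:ℝ) < C₀ := lt_of_lt_of_le one_pos (le_max_right _ _)
  have hbig : ∀ α : ℕ, N ≤ α →
      ‖c α‖ ≤ C₀ * Real.exp (-(s * K * (α:ℝ) ^ (1/(2*s)))) := by
    intro α hα
    set T : ℝ := K * (α:ℝ) ^ ((1-2*s)/(2*s)) with hT
    have hT0 : 0 ≤ T := by positivity
    set R : ℝ := Real.exp T with hRdef
    have hR0 : (0:ℝ) < R := Real.exp_pos T
    have hM : ∀ z : ℂ, ‖z‖ = R →
        ‖F z‖ ≤ C₀ * Real.exp (r₀ * (Real.log (1+R)) ^ (1/(1-2*s))) := by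
      intro z hz
      refine (hFbound z).trans ?_
      rw [hz]
      exact mul_le_mul_of_nonneg_right (le_max_left _ _) (Real.exp_pos _).le
    have h1 := coeff_bound c F hF' hR0 hM α
    have hL : Real.log (1+R) ≤ T + 1 := by
      have hexp : 1 + Real.exp T ≤ Real.exp (T+1) := by
        rw [Real.exp_add]
        nlinarith [Real.exp_one_gt_d9, Real.exp_pos T, Real.one_le_exp hT0]
      calc Real.log (1+R) ≤ Real.log (Real.exp (T+1)) :=
            Real.log_le_log (by positivity) hexp
        _ = T+1 := Real.log_exp _
    have hLnn : 0 ≤ Real.log (1+R) := Real.log_nonneg (by nlinarith)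
    have hpow : (Real.log (1+R)) ^ (1/(1-2*s)) ≤ (T+1) ^ (1/(1-2*s)) :=
      Real.rpow_le_rpow hLnn hL (by positivity)
    have hNα := hN α hα
    have key : Real.sqrt (Nat.factorial α : ℝ) *
        Real.exp (r₀ * (Real.log (1+R)) ^ (1/(1-2*s)))
        ≤ R ^ α * Real.exp (-(s * K * (α:ℝ) ^ (1/(2*s)))) := by
      have hRα : R ^ α = Real.exp ((α:ℝ) * T) := by
        rw [hRdef, ← Real.exp_nat_mul]
      calc Real.sqrt (Nat.factorial α : ℝ) * Real.exp (r₀ * (Real.log (1+R)) ^ (1/(1-2*s)))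
          ≤ Real.exp (((α:ℝ)/2) * Real.log ((α:ℝ)+1)) * Real.exp (r₀ * (T+1) ^ (1/(1-2*s))) := by
            apply mul_le_mul (sqrt_factorial_le α)
              (Real.exp_le_exp.2 (mul_le_mul_of_nonneg_left hpow hr₀.le))
              (Real.exp_pos _).le (Real.exp_pos _).le
        _ = Real.exp (((α:ℝ)/2) * Real.log ((α:ℝ)+1) + r₀ * (T+1) ^ (1/(1-2*s))) :=
            (Real.exp_add _ _).symm
        _ ≤ Real.exp ((α:ℝ) * T + -(s * K * (α:ℝ) ^ (1/(2*s)))) := by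
            apply Real.exp_le_exp.2
            rw [hT]
            linarith [hNα]
        _ = R ^ α * Real.exp (-(s * K * (α:ℝ) ^ (1/(2*s)))) := by
            rw [Real.exp_add, hRα]
    calc ‖c α‖ ≤ Real.sqrt (Nat.factorial α : ℝ) *
          (C₀ * Real.exp (r₀ * (Real.log (1+R)) ^ (1/(1-2*s)))) / R ^ α := h1
      _ = C₀ * (Real.sqrt (Nat.factorial α : ℝ) *
          Real.exp (r₀ * (Real.log (1+R)) ^ (1/(1-2*s)))) / R ^ α := by ring
      _ ≤ C₀ * (R ^ α * Real.exp (-(s * K * (α:ℝ) ^ (1/(2*s))))) / R ^ α := by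
          apply div_le_div_of_nonneg_right ?_ (by positivity)
          exact mul_le_mul_of_nonneg_left key hC₀0.le
      _ = C₀ * Real.exp (-(s * K * (α:ℝ) ^ (1/(2*s)))) := by
          field_simp
  set S : ℝ := ∑ i ∈ Finset.range N, ‖c i‖ * Real.exp (s * K * (i:ℝ) ^ (1/(2*s))) with hS
  have hSnn : 0 ≤ S := Finset.sum_nonneg fun i _ => by positivity
  refine ⟨C₀ + S, by linarith, fun α => ?_⟩
  by_cases hα : N ≤ α
  · exact (hbig α hα).trans
      (mul_le_mul_of_nonneg_right (by linarith) (Real.exp_pos _).le)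
  · have hmem : α ∈ Finset.range N := Finset.mem_range.2 (not_le.1 hα)
    have hterm : ‖c α‖ * Real.exp (s * K * (α:ℝ) ^ (1/(2*s))) ≤ S :=
      Finset.single_le_sum (f := fun i => ‖c i‖ * Real.exp (s * K * (i:ℝ) ^ (1/(2*s))))
        (fun i _ => by positivity) hmem
    have heq : ‖c α‖ = (‖c α‖ * Real.exp (s * K * (α:ℝ) ^ (1/(2*s)))) *
        Real.exp (-(s * K * (α:ℝ) ^ (1/(2*s)))) := by
      rw [mul_assoc, ← Real.exp_add]; simp
    rw [heq]
    exact mul_le_mul_of_nonneg_right (hterm.trans (by linarith)) (Real.exp_pos _).le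
end
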